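/- arXiv:1804.00597 — 12 statements merged into one kernel-verified Lean document; each statement's English description precedes it below -/
import Mathlib

section
/- Let R be an associative unital ℂ-algebra and c ∈ ℂ nonzero. Suppose a, b : D → R (for a subset D ⊆ ℂ) satisfy b(u)b(v) = b(v)b(u) for all u, v ∈ D, and a(v)b(u) = f(u,v) b(u)a(v) + g(v,u) b(v)a(u) for all distinct u, v ∈ D. Then for any pairwise distinct u_1, …, u_M ∈ D and any v ∈ D distinct from all u_i, one has the multiple-action formula a(v) ∏_{i=1}^M b(u_i) = (∏_{i=1}^M f(u_i,v)) (∏_{i=1}^M b(u_i)) a(v) + Σ_{i=1}^M g(v,u_i) (∏_{j≠i} f(u_j,u_i)) b(v) (∏_{j≠i} b(u_j)) a(u_i). -/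
open Finset


lemma MA.erase_zero_prod {M : ℕ} (f : Fin (M+1) → ℂ) :
    ∏ j ∈ univ.erase (0 : Fin (M+1)), f j = ∏ i : Fin M, f i.succ := by
  have h : (univ : Finset (Fin (M+1))).erase 0 = univ.image Fin.succ := by
    ext j
    simp [Fin.exists_succ_eq]
  rw [h, prod_image (fun a _ b _ h => Fin.succ_injective _ h)]

lemma MA.erase_succ_prod {M : ℕ} (k : Fin M) (f : Fin (M+1) → ℂ) :
    ∏ j ∈ univ.erase k.succ, f j = f 0 * ∏ j ∈ univ.erase k, f j.succ := by
  have h : (univ : Finset (Fin (M+1))).erase k.succ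
      = insert (0 : Fin (M+1)) ((univ.erase k).image Fin.succ) := by
    ext j
    cases j using Fin.cases with
    | zero => simp [(Fin.succ_ne_zero k).symm]
    | succ j => simp [Fin.succ_ne_zero, Fin.succ_inj]
  rw [h, prod_insert (by simp [Fin.succ_ne_zero, eq_comm]),
    prod_image (fun a _ b _ h => Fin.succ_injective _ h)]

lemma MA.key_identity (c x y v : ℂ) (hxv : x ≠ v) (hvy : v ≠ y) (hxy : x ≠ y) :
    (x - v + c) / (x - v) * (c / (v - y)) + c / (v - x) * (c / (x - y))
      = c / (v - y) * ((x - y + c) / (x - y)) := by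
  have h1 : x - v ≠ 0 := sub_ne_zero.2 hxv
  have h2 : v - y ≠ 0 := sub_ne_zero.2 hvy
  have h3 : x - y ≠ 0 := sub_ne_zero.2 hxy
  have h4 : v - x ≠ 0 := sub_ne_zero.2 hxv.symm
  field_simp
  ring



open Finset in
/-- First multiple-action formula of Appendix A: for operators `a`, `b` satisfying
`b(u)b(v) = b(v)b(u)` and `a(v)b(u) = f(u,v) b(u)a(v) + g(v,u) b(v)a(u)`
(with `g(u,v) = c/(u-v)`, `f(u,v) = (u-v+c)/(u-v)`), the multiple action of `a(v)`
on a product of `b(u_i)`'s. -/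
theorem multiple_action_same_first_index
    {R : Type*} [Ring R] [Algebra ℂ R] (c : ℂ) (hc : c ≠ 0)
    (D : Set ℂ) (a b : ℂ → R)
    (hbb : ∀ u ∈ D, ∀ v ∈ D, b u * b v = b v * b u)
    (hab : ∀ u ∈ D, ∀ v ∈ D, u ≠ v →
      a v * b u = ((u - v + c) / (u - v)) • (b u * a v)
        + (c / (v - u)) • (b v * a u))
    (M : ℕ) (u : Fin M → ℂ) (hu : ∀ i, u i ∈ D) (huinj : Function.Injective u)
    (v : ℂ) (hv : v ∈ D) (hvu : ∀ i, v ≠ u i) :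
    a v * (List.ofFn fun i => b (u i)).prod =
      (∏ i, (u i - v + c) / (u i - v)) • ((List.ofFn fun i => b (u i)).prod * a v)
      + ∑ i, ((c / (v - u i)) * ∏ j ∈ univ.erase i, (u j - u i + c) / (u j - u i)) •
          (b v * (List.ofFn fun j => if j = i then (1 : R) else b (u j)).prod * a (u i)) := by

  induction M generalizing v with
  | zero => simp
  | succ M ih =>
    have hu' : ∀ i : Fin M, u i.succ ∈ D := fun i => hu i.succ
    have huinj' : Function.Injective (fun i : Fin M => u i.succ) :=
      fun i j h => Fin.succ_injective _ (huinj h)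
    have h0ne : ∀ i : Fin M, u 0 ≠ u i.succ :=
      fun i h => (Fin.succ_ne_zero i).symm (huinj h)
    have ihv := ih (fun i => u i.succ) hu' huinj' v hv (fun i => hvu i.succ)
    have ih0 := ih (fun i => u i.succ) hu' huinj' (u 0) (hu 0) h0ne
    have hP : (List.ofFn fun i => b (u i)).prod
        = b (u 0) * (List.ofFn fun i : Fin M => b (u i.succ)).prod := by
      rw [List.ofFn_succ, List.prod_cons]
    rw [hP, ← mul_assoc, hab _ (hu 0) _ hv (hvu 0).symm, add_mul, smul_mul_assoc,
      smul_mul_assoc, mul_assoc, mul_assoc, ihv, ih0, Fin.prod_univ_succ, Fin.sum_univ_succ]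
    have hQ0 : (List.ofFn fun j : Fin (M+1) => if j = 0 then (1:R) else b (u j)).prod
        = (List.ofFn fun i : Fin M => b (u i.succ)).prod := by
      simp [List.ofFn_succ, Fin.succ_ne_zero]
    rw [hQ0, MA.erase_zero_prod (fun j => (u j - u 0 + c) / (u j - u 0))]
    have hsum : ∑ i : Fin M,
        (c / (v - u i.succ) * ∏ j ∈ univ.erase i.succ, (u j - u i.succ + c) / (u j - u i.succ)) •
          (b v * (List.ofFn fun j => if j = i.succ then (1:R) else b (u j)).prod * a (u i.succ))
        = ∑ i : Fin M,
        (((u 0 - v + c) / (u 0 - v) *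
            (c / (v - u i.succ) * ∏ j ∈ univ.erase i, (u j.succ - u i.succ + c) / (u j.succ - u i.succ))) •
          (b (u 0) * (b v * (List.ofFn fun j => if j = i then (1:R) else b (u j.succ)).prod * a (u i.succ)))
        + (c / (v - u 0) *
            (c / (u 0 - u i.succ) * ∏ j ∈ univ.erase i, (u j.succ - u i.succ + c) / (u j.succ - u i.succ))) •
          (b v * (b (u 0) * (List.ofFn fun j => if j = i then (1:R) else b (u j.succ)).prod * a (u i.succ)))) := by
      refine Finset.sum_congr rfl fun k _ => ?_
      have hQk : (List.ofFn fun j : Fin (M+1) => if j = k.succ then (1:R) else b (u j)).prod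
          = b (u 0) * (List.ofFn fun j : Fin M => if j = k then (1:R) else b (u j.succ)).prod := by
        simp [List.ofFn_succ, Fin.succ_inj, (Fin.succ_ne_zero k).symm]
      set Q : R := (List.ofFn fun j : Fin M => if j = k then (1:R) else b (u j.succ)).prod with hQ
      set Pi : ℂ := ∏ j ∈ univ.erase k, (u j.succ - u k.succ + c) / (u j.succ - u k.succ) with hPi
      have hE : b (u 0) * (b v * Q * a (u k.succ)) = b v * (b (u 0) * Q * a (u k.succ)) := by
        simp only [← mul_assoc]
        rw [hbb _ (hu 0) _ hv]
      have hcoef : c / (v - u k.succ) * ((u 0 - u k.succ + c) / (u 0 - u k.succ) * Pi)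
          = (u 0 - v + c) / (u 0 - v) * (c / (v - u k.succ) * Pi)
            + c / (v - u 0) * (c / (u 0 - u k.succ) * Pi) := by
        have h1 : u 0 - v ≠ 0 := sub_ne_zero.2 (hvu 0).symm
        have h2 : v - u k.succ ≠ 0 := sub_ne_zero.2 (hvu k.succ)
        have h3 : u 0 - u k.succ ≠ 0 := sub_ne_zero.2 (h0ne k)
        have h4 : v - u 0 ≠ 0 := sub_ne_zero.2 (hvu 0)
        field_simp
        ring
      calc (c / (v - u k.succ) * ∏ j ∈ univ.erase k.succ, (u j - u k.succ + c) / (u j - u k.succ)) •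
            (b v * (List.ofFn fun j => if j = k.succ then (1:R) else b (u j)).prod * a (u k.succ))
          = (c / (v - u k.succ) * ((u 0 - u k.succ + c) / (u 0 - u k.succ) * Pi)) •
            (b v * (b (u 0) * Q * a (u k.succ))) := by
            rw [MA.erase_succ_prod k (fun j => (u j - u k.succ + c) / (u j - u k.succ)), hQk,
              mul_assoc (b v)]
        _ = ((u 0 - v + c) / (u 0 - v) * (c / (v - u k.succ) * Pi)) • (b v * (b (u 0) * Q * a (u k.succ)))
            + (c / (v - u 0) * (c / (u 0 - u k.succ) * Pi)) • (b v * (b (u 0) * Q * a (u k.succ))) := by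
            rw [hcoef, add_smul]
        _ = ((u 0 - v + c) / (u 0 - v) * (c / (v - u k.succ) * Pi)) • (b (u 0) * (b v * Q * a (u k.succ)))
            + (c / (v - u 0) * (c / (u 0 - u k.succ) * Pi)) • (b v * (b (u 0) * Q * a (u k.succ))) := by
            rw [hE]
    rw [hsum, Finset.sum_add_distrib]
    simp only [mul_add, Finset.mul_sum, mul_smul_comm, smul_add, Finset.smul_sum, smul_smul, mul_assoc]
    abel
end

section
/- Let R be an associative unital ℂ-algebra and c ∈ ℂ nonzero. Suppose a, b : D → R (for a subset D ⊆ ℂ) satisfy b(u)b(v) = b(v)b(u) for all u, v ∈ D, and a(v)b(u) = f(v,u) b(u)a(v) + g(u,v) b(v)a(u) for all distinct u, v ∈ D. Then for any pairwise distinct u_1, …, u_M ∈ D and any v ∈ D distinct from all u_i, one has the multiple-action formula a(v) ∏_{i=1}^M b(u_i) = (∏_{i=1}^M f(v,u_i)) (∏_{i=1}^M b(u_i)) a(v) + Σ_{i=1}^M g(u_i,v) (∏_{j≠i} f(u_i,u_j)) b(v) (∏_{j≠i} b(u_j)) a(u_i). -/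
open Finset

private lemma key_id (c x y w : ℂ) (hxw : x ≠ w) (hxy : x ≠ y) (hwy : w ≠ y) :
    (w - y + c) / (w - y) * (c / (x - w)) + c / (y - w) * (c / (x - y))
      = c / (x - w) * ((x - y + c) / (x - y)) := by
  have h1 : w - y ≠ 0 := sub_ne_zero.2 hwy
  have h2 : x - w ≠ 0 := sub_ne_zero.2 hxw
  have h3 : x - y ≠ 0 := sub_ne_zero.2 hxy
  have h4 : y - w ≠ 0 := sub_ne_zero.2 hwy.symm
  field_simp
  ring

private lemma prod_erase_ite {M : ℕ} (i : Fin M) (F : Fin M → ℂ) :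
    ∏ j ∈ Finset.univ.erase i, F j = ∏ j, if j = i then 1 else F j := by
  rw [← Finset.mul_prod_erase Finset.univ (fun j => if j = i then (1:ℂ) else F j)
    (Finset.mem_univ i), if_pos rfl, one_mul]
  exact Finset.prod_congr rfl fun j hj => (if_neg (Finset.ne_of_mem_erase hj)).symm

open Finset in
/-- Second multiple-action formula of Appendix A: for operators `a`, `b` satisfying
`b(u)b(v) = b(v)b(u)` and `a(v)b(u) = f(v,u) b(u)a(v) + g(u,v) b(v)a(u)`
(with `g(u,v) = c/(u-v)`, `f(u,v) = (u-v+c)/(u-v)`), the multiple action of `a(v)`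
on a product of `b(u_i)`'s. -/
theorem multiple_action_same_second_index
    {R : Type*} [Ring R] [Algebra ℂ R] (c : ℂ) (hc : c ≠ 0)
    (D : Set ℂ) (a b : ℂ → R)
    (hbb : ∀ u ∈ D, ∀ v ∈ D, b u * b v = b v * b u)
    (hab : ∀ u ∈ D, ∀ v ∈ D, u ≠ v →
      a v * b u = ((v - u + c) / (v - u)) • (b u * a v)
        + (c / (u - v)) • (b v * a u))
    (M : ℕ) (u : Fin M → ℂ) (hu : ∀ i, u i ∈ D) (huinj : Function.Injective u)
    (v : ℂ) (hv : v ∈ D) (hvu : ∀ i, v ≠ u i) :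
    a v * (List.ofFn fun i => b (u i)).prod =
      (∏ i, (v - u i + c) / (v - u i)) • ((List.ofFn fun i => b (u i)).prod * a v)
      + ∑ i, ((c / (u i - v)) * ∏ j ∈ univ.erase i, (u i - u j + c) / (u i - u j)) •
          (b v * (List.ofFn fun j => if j = i then (1 : R) else b (u j)).prod * a (u i)) := by
  induction M generalizing v hv with
  | zero => simp
  | succ M IH =>
    -- notation
    set u' : Fin M → ℂ := fun k => u k.succ with hu'def
    have hu'D : ∀ k, u' k ∈ D := fun k => hu k.succ
    have hu'inj : Function.Injective u' := fun k l h => Fin.succ_injective _ (huinj h)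
    have hvu' : ∀ k, v ≠ u' k := fun k => hvu k.succ
    have h0u' : ∀ k, u 0 ≠ u' k := fun k h => (Fin.succ_ne_zero k) ((huinj h).symm)
    set P : R := (List.ofFn fun k : Fin M => b (u' k)).prod with hPdef
    set H : Fin M → R := fun k =>
      (List.ofFn fun j : Fin M => if j = k then (1 : R) else b (u' j)).prod with hHdef
    set f0 : ℂ := (v - u 0 + c) / (v - u 0) with hf0
    set g0 : ℂ := c / (u 0 - v) with hg0
    set Fv : ℂ := ∏ k, (v - u' k + c) / (v - u' k) with hFv
    set F0 : ℂ := ∏ k, (u 0 - u' k + c) / (u 0 - u' k) with hF0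
    set s : Fin M → ℂ := fun k =>
      c / (u' k - v) * ∏ j ∈ univ.erase k, (u' k - u' j + c) / (u' k - u' j) with hs
    set t : Fin M → ℂ := fun k =>
      c / (u' k - u 0) * ∏ j ∈ univ.erase k, (u' k - u' j + c) / (u' k - u' j) with ht
    have hP : (List.ofFn fun i : Fin (M + 1) => b (u i)).prod = b (u 0) * P := by
      rw [List.ofFn_succ, List.prod_cons]
    have IHv : a v * P = Fv • (P * a v)
        + ∑ k, s k • (b v * H k * a (u' k)) := IH u' hu'D hu'inj v hv hvu'
    have IH0 : a (u 0) * P = F0 • (P * a (u 0))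
        + ∑ k, t k • (b (u 0) * H k * a (u' k)) := IH u' hu'D hu'inj (u 0) (hu 0) h0u'
    -- expand LHS
    have expand : a v * (List.ofFn fun i : Fin (M + 1) => b (u i)).prod
        = (f0 * Fv) • (b (u 0) * P * a v)
          + (g0 * F0) • (b v * P * a (u 0))
          + ∑ k, (s k * ((u' k - u 0 + c) / (u' k - u 0))) •
              (b v * (b (u 0) * H k) * a (u' k)) := by
      rw [hP, ← mul_assoc, hab (u 0) (hu 0) v hv (hvu 0).symm, add_mul,
        smul_mul_assoc, smul_mul_assoc, mul_assoc, mul_assoc, IHv, IH0]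
      simp only [mul_add, smul_add, Finset.mul_sum, Finset.smul_sum, smul_smul,
        mul_smul_comm]
      rw [add_add_add_comm, ← Finset.sum_add_distrib]
      congr 2
      · rw [← mul_assoc]
      · rw [← mul_assoc]
      · funext k
        have hcomm : b (u 0) * (b v * H k * a (u' k))
            = b v * (b (u 0) * H k) * a (u' k) := by
          rw [← mul_assoc, ← mul_assoc, ← mul_assoc, hbb (u 0) (hu 0) v hv]
        have hcomm2 : b v * (b (u 0) * H k * a (u' k))
            = b v * (b (u 0) * H k) * a (u' k) := by
          rw [← mul_assoc, ← mul_assoc, mul_assoc (b v)]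
        rw [hcomm, hcomm2, ← add_smul]
        congr 1
        have key := key_id c (u' k) (u 0) v (hvu' k).symm (h0u' k).symm (hvu 0)
        simp only [hs, ht, hf0, hg0]
        linear_combination (∏ j ∈ univ.erase k, (u' k - u' j + c) / (u' k - u' j)) * key
    -- now match the RHS of the goal with `expand`
    rw [expand, hP, Fin.prod_univ_succ, Fin.sum_univ_succ]
    have h00 : ∀ k : Fin M, (0 : Fin (M + 1)) ≠ k.succ := fun k => (Fin.succ_ne_zero k).symm
    simp only [prod_erase_ite, Fin.prod_univ_succ, List.ofFn_succ, List.prod_cons,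
      Fin.succ_ne_zero, h00, Fin.succ_inj, if_pos, if_neg, if_true, if_false, ite_true,
      ite_false, one_mul, reduceIte]
    rw [← add_assoc]
    congr 1
    refine Finset.sum_congr rfl fun k _ => ?_
    congr 1
    simp only [hs, hu'def]
    rw [← prod_erase_ite]
    ring
end

section
/- Let V be a ℂ-vector space, c ∈ ℂ nonzero, κ, κ̃ ∈ ℂ, and let t_{11}, t_{12}, t_{22} : D → End(V) (D ⊆ ℂ) satisfy, for all distinct u, v ∈ D: t_{12}(u)t_{12}(v) = t_{12}(v)t_{12}(u); t_{11}(v)t_{12}(u) = f(u,v) t_{12}(u)t_{11}(v) + g(v,u) t_{12}(v)t_{11}(u); t_{22}(v)t_{12}(u) = f(v,u) t_{12}(u)t_{22}(v) + g(u,v) t_{12}(v)t_{22}(u). Let |0⟩ ∈ V and λ_1, λ_2 : D → ℂ satisfy t_{11}(u)|0⟩ = λ_1(u)|0⟩ and t_{22}(u)|0⟩ = λ_2(u)|0⟩ for all u ∈ D. Set t_d(z) = κ̃ t_{11}(z) + κ t_{22}(z) and 𝔹(ū) = ∏_{i=1}^M t_{12}(u_i)|0⟩. Then for pairwise distinct u_1,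 …, u_M ∈ D and z ∈ D distinct from all u_i: t_d(z)𝔹(ū) = Λ_d(z,ū) 𝔹(ū) + Σ_{i=1}^M g(u_i,z) E_d(u_i,ū_i) t_{12}(z) 𝔹(ū_i), where Λ_d(z,ū) = κ̃ λ_1(z) f(ū,z) + κ λ_2(z) f(z,ū) and E_d(u_i,ū_i) = −κ̃ λ_1(u_i) f(ū_i,u_i) + κ λ_2(u_i) f(u_i,ū_i). In particular, if the Bethe equations E_d(u_i,ū_i) = 0 hold for all i = 1, …, M, then 𝔹(ū) is an eigenvector of t_d(z) with eigenvalue Λ_d(z,ū). -/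
open Finset in
lemma ABA_prod_erase_eq_ite {M : ℕ} (i : Fin M) (F : Fin M → ℂ) :
    ∏ j ∈ univ.erase i, F j = ∏ j, (if j = i then 1 else F j) := by
  have h1 : (if i = i then (1:ℂ) else F i) * ∏ j ∈ univ.erase i, (if j = i then (1:ℂ) else F j)
      = ∏ j, (if j = i then (1:ℂ) else F j) :=
    Finset.mul_prod_erase univ (fun j => if j = i then (1:ℂ) else F j) (mem_univ i)
  rw [if_pos rfl, one_mul] at h1
  rw [← h1]
  exact Finset.prod_congr rfl fun j hj => (if_neg (Finset.mem_erase.mp hj).1).symm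

open Finset in
lemma ABA_aux {V : Type*} [AddCommGroup V] [Module ℂ V]
    (D : Set ℂ) (t12 T : ℂ → Module.End ℂ V) (vac : V)
    (μ : ℂ → ℂ) (φ ψ : ℂ → ℂ → ℂ)
    (h1212 : ∀ u ∈ D, ∀ v ∈ D, t12 u * t12 v = t12 v * t12 u)
    (hrel : ∀ u ∈ D, ∀ v ∈ D, u ≠ v →
      T v * t12 u = φ u v • (t12 u * T v) + ψ v u • (t12 v * T u))
    (hvac : ∀ u ∈ D, T u vac = μ u • vac)
    (hid : ∀ a b e, a ∈ D → b ∈ D → e ∈ D → a ≠ b → b ≠ e → a ≠ e →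
      φ a b * ψ b e + ψ b a * ψ a e = ψ b e * φ a e) :
    ∀ (M : ℕ) (u : Fin M → ℂ), (∀ i, u i ∈ D) → Function.Injective u →
      ∀ v ∈ D, (∀ i, v ≠ u i) →
      T v ((List.ofFn fun i => t12 (u i)).prod vac)
        = (μ v * ∏ i, φ (u i) v) • ((List.ofFn fun i => t12 (u i)).prod vac)
          + ∑ i, (ψ v (u i) * μ (u i) * ∏ j, (if j = i then 1 else φ (u j) (u i)))
              • t12 v ((List.ofFn fun j => if j = i then (1 : Module.End ℂ V) else t12 (u j)).prod vac) := by
  intro M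
  induction M with
  | zero =>
    intro u _ _ v hv _
    simp [hvac v hv]
  | succ M ih =>
    intro u hu huinj v hv hvu
    have hu' : ∀ i : Fin M, u i.succ ∈ D := fun i => hu i.succ
    have hinj' : Function.Injective fun i : Fin M => u i.succ := fun a b h =>
      Fin.succ_injective M (huinj h)
    have h0 : ∀ i : Fin M, u 0 ≠ u i.succ := fun i h => Fin.succ_ne_zero i (huinj h).symm
    have hv0 : v ≠ u 0 := hvu 0
    have hv' : ∀ i : Fin M, v ≠ u i.succ := fun i => hvu i.succ
    set P : V := (List.ofFn fun i : Fin M => t12 (u i.succ)).prod vac with hP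
    set Q : Fin M → V := fun i =>
      (List.ofFn fun j : Fin M => if j = i then (1 : Module.End ℂ V) else t12 (u j.succ)).prod vac with hQ
    have hBfull : (List.ofFn fun i => t12 (u i)).prod vac = t12 (u 0) P := by
      rw [hP, List.ofFn_succ, List.prod_cons, Module.End.mul_apply]
    have hBsub0 : ((List.ofFn fun j => if j = (0 : Fin (M + 1)) then (1 : Module.End ℂ V)
        else t12 (u j)).prod) vac = P := by
      rw [hP, List.ofFn_succ, List.prod_cons, if_pos rfl, one_mul]
      simp [Fin.succ_ne_zero]
    have hBsubS : ∀ i : Fin M, ((List.ofFn fun j => if j = Fin.succ i then (1 : Module.End ℂ V)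
        else t12 (u j)).prod) vac = t12 (u 0) (Q i) := by
      intro i
      rw [hQ, List.ofFn_succ, List.prod_cons,
        if_neg (show (0 : Fin (M+1)) ≠ i.succ from (Fin.succ_ne_zero i).symm),
        Module.End.mul_apply]
      simp [Fin.succ_inj]
    have hcomm : ∀ x : V, t12 (u 0) (t12 v x) = t12 v (t12 (u 0) x) := fun x => by
      have h := h1212 (u 0) (hu 0) v hv
      have := congrArg (fun L : Module.End ℂ V => L x) h
      simpa [Module.End.mul_apply] using this
    have step1 : T v (t12 (u 0) P) =
        φ (u 0) v • t12 (u 0) (T v P) + ψ v (u 0) • t12 v (T (u 0) P) := by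
      have h := hrel (u 0) (hu 0) v hv (fun h => hv0 h.symm)
      have := congrArg (fun L : Module.End ℂ V => L P) h
      simpa [Module.End.mul_apply] using this
    have ihv : T v P = (μ v * ∏ i : Fin M, φ (u i.succ) v) • P
        + ∑ i : Fin M, (ψ v (u i.succ) * μ (u i.succ) *
            ∏ j : Fin M, (if j = i then 1 else φ (u j.succ) (u i.succ))) • t12 v (Q i) :=
      ih (fun i => u i.succ) hu' hinj' v hv hv'
    have ih0 : T (u 0) P = (μ (u 0) * ∏ i : Fin M, φ (u i.succ) (u 0)) • P
        + ∑ i : Fin M, (ψ (u 0) (u i.succ) * μ (u i.succ) *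
            ∏ j : Fin M, (if j = i then 1 else φ (u j.succ) (u i.succ))) • t12 (u 0) (Q i) :=
      ih (fun i => u i.succ) hu' hinj' (u 0) (hu 0) h0
    have hidterm : ∀ i : Fin M,
        φ (u 0) v * (ψ v (u i.succ) * μ (u i.succ) *
            ∏ j : Fin M, (if j = i then 1 else φ (u j.succ) (u i.succ)))
          + ψ v (u 0) * (ψ (u 0) (u i.succ) * μ (u i.succ) *
            ∏ j : Fin M, (if j = i then 1 else φ (u j.succ) (u i.succ)))
        = ψ v (u i.succ) * μ (u i.succ) *
            (φ (u 0) (u i.succ) * ∏ j : Fin M, (if j = i then 1 else φ (u j.succ) (u i.succ))) := by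
      intro i
      have h := hid (u 0) v (u i.succ) (hu 0) hv (hu' i) (fun h => hv0 h.symm) (hv' i) (h0 i)
      linear_combination (μ (u i.succ) * ∏ j : Fin M, (if j = i then 1 else φ (u j.succ) (u i.succ))) * h
    have hprod0 : (∏ j : Fin (M+1), (if j = 0 then 1 else φ (u j) (u 0)))
        = ∏ j : Fin M, φ (u j.succ) (u 0) := by
      rw [Fin.prod_univ_succ, if_pos rfl, one_mul]
      exact Finset.prod_congr rfl fun j _ => if_neg (Fin.succ_ne_zero j)
    have hprodS : ∀ i : Fin M, (∏ j : Fin (M+1), (if j = i.succ then 1 else φ (u j) (u i.succ)))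
        = φ (u 0) (u i.succ) * ∏ j : Fin M, (if j = i then 1 else φ (u j.succ) (u i.succ)) := by
      intro i
      rw [Fin.prod_univ_succ, if_neg (show (0:Fin (M+1)) ≠ i.succ from (Fin.succ_ne_zero i).symm)]
      congr 1
      exact Finset.prod_congr rfl fun j _ => by simp [Fin.succ_inj]
    have hRS : (∑ i : Fin M,
          (ψ v (u i.succ) * μ (u i.succ) * ∏ j : Fin (M+1), (if j = i.succ then 1 else φ (u j) (u i.succ)))
            • t12 v (((List.ofFn fun j => if j = Fin.succ i then (1 : Module.End ℂ V)
                else t12 (u j)).prod) vac))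
        = ∑ i : Fin M, (ψ v (u i.succ) * μ (u i.succ) *
            (φ (u 0) (u i.succ) * ∏ j : Fin M, (if j = i then 1 else φ (u j.succ) (u i.succ))))
              • t12 v (t12 (u 0) (Q i)) :=
      Finset.sum_congr rfl fun i _ => by rw [hprodS i, hBsubS i]
    have hsum : (∑ i : Fin M, (φ (u 0) v * (ψ v (u i.succ) * μ (u i.succ) *
            ∏ j : Fin M, (if j = i then 1 else φ (u j.succ) (u i.succ)))) • t12 v (t12 (u 0) (Q i)))
        + ∑ i : Fin M, (ψ v (u 0) * (ψ (u 0) (u i.succ) * μ (u i.succ) *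
            ∏ j : Fin M, (if j = i then 1 else φ (u j.succ) (u i.succ)))) • t12 v (t12 (u 0) (Q i))
        = ∑ i : Fin M, (ψ v (u i.succ) * μ (u i.succ) *
            (φ (u 0) (u i.succ) * ∏ j : Fin M, (if j = i then 1 else φ (u j.succ) (u i.succ))))
              • t12 v (t12 (u 0) (Q i)) := by
      rw [← Finset.sum_add_distrib]
      exact Finset.sum_congr rfl fun i _ => by rw [← add_smul, hidterm i]
    rw [hBfull, step1, ihv, ih0]
    rw [Fin.sum_univ_succ, Fin.prod_univ_succ, hBsub0, hprod0, hRS]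
    simp only [map_add, map_smul, smul_add, Finset.smul_sum, smul_smul, map_sum, hcomm]
    rw [← hsum]
    module


open Finset in
/-- Algebraic Bethe ansatz for the diagonally twisted transfer matrix
`t_d(z) = κ̃ t₁₁(z) + κ t₂₂(z)` acting on the Bethe vector `𝔹(ū) = ∏ t₁₂(uᵢ)|0⟩`:
the off-shell action formula, and the on-shell eigenvector statement. -/
theorem ABA_diagonal_twist
    {V : Type*} [AddCommGroup V] [Module ℂ V] (c : ℂ) (hc : c ≠ 0)
    (D : Set ℂ) (t11 t12 t22 : ℂ → Module.End ℂ V) (κ κt : ℂ)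
    (h1212 : ∀ u ∈ D, ∀ v ∈ D, t12 u * t12 v = t12 v * t12 u)
    (h1112 : ∀ u ∈ D, ∀ v ∈ D, u ≠ v →
      t11 v * t12 u = ((u - v + c) / (u - v)) • (t12 u * t11 v)
        + (c / (v - u)) • (t12 v * t11 u))
    (h2212 : ∀ u ∈ D, ∀ v ∈ D, u ≠ v →
      t22 v * t12 u = ((v - u + c) / (v - u)) • (t12 u * t22 v)
        + (c / (u - v)) • (t12 v * t22 u))
    (vac : V) (lam1 lam2 : ℂ → ℂ)
    (hvac1 : ∀ u ∈ D, t11 u vac = lam1 u • vac)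
    (hvac2 : ∀ u ∈ D, t22 u vac = lam2 u • vac)
    (M : ℕ) (u : Fin M → ℂ) (hu : ∀ i, u i ∈ D) (huinj : Function.Injective u)
    (z : ℂ) (hz : z ∈ D) (hzu : ∀ i, z ≠ u i)
    (B : V) (hB : B = (List.ofFn fun i => t12 (u i)).prod vac)
    (Bsub : Fin M → V)
    (hBsub : ∀ i, Bsub i =
      (List.ofFn fun j => if j = i then (1 : Module.End ℂ V) else t12 (u j)).prod vac)
    (Λd : ℂ) (hΛd : Λd = κt * lam1 z * (∏ i, (u i - z + c) / (u i - z))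
      + κ * lam2 z * (∏ i, (z - u i + c) / (z - u i)))
    (Ed : Fin M → ℂ)
    (hEd : ∀ i, Ed i =
      -(κt * lam1 (u i) * ∏ j ∈ univ.erase i, (u j - u i + c) / (u j - u i))
      + κ * lam2 (u i) * ∏ j ∈ univ.erase i, (u i - u j + c) / (u i - u j)) :
    (κt • t11 z + κ • t22 z) B =
      Λd • B + ∑ i, ((c / (u i - z)) * Ed i) • (t12 z (Bsub i)) ∧
    ((∀ i, Ed i = 0) → (κt • t11 z + κ • t22 z) B = Λd • B) := by

  have hid1 : ∀ a b e : ℂ, a ∈ D → b ∈ D → e ∈ D → a ≠ b → b ≠ e → a ≠ e →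
      ((a - b + c) / (a - b)) * (c / (b - e)) + (c / (b - a)) * (c / (a - e))
        = (c / (b - e)) * ((a - e + c) / (a - e)) := by
    intro a b e _ _ _ hab hbe hae
    have h1 : a - b ≠ 0 := sub_ne_zero.mpr hab
    have h2 : b - e ≠ 0 := sub_ne_zero.mpr hbe
    have h3 : a - e ≠ 0 := sub_ne_zero.mpr hae
    have h4 : b - a ≠ 0 := sub_ne_zero.mpr (Ne.symm hab)
    field_simp
    ring
  have hid2 : ∀ a b e : ℂ, a ∈ D → b ∈ D → e ∈ D → a ≠ b → b ≠ e → a ≠ e →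
      ((b - a + c) / (b - a)) * (c / (e - b)) + (c / (a - b)) * (c / (e - a))
        = (c / (e - b)) * ((e - a + c) / (e - a)) := by
    intro a b e _ _ _ hab hbe hae
    have h1 : a - b ≠ 0 := sub_ne_zero.mpr hab
    have h2 : e - b ≠ 0 := sub_ne_zero.mpr (Ne.symm hbe)
    have h3 : e - a ≠ 0 := sub_ne_zero.mpr (Ne.symm hae)
    have h4 : b - a ≠ 0 := sub_ne_zero.mpr (Ne.symm hab)
    field_simp
    ring
  have aux1 := ABA_aux D t12 t11 vac lam1
    (fun a b => (a - b + c) / (a - b)) (fun a b => c / (a - b))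
    h1212 h1112 hvac1 hid1 M u hu huinj z hz hzu
  have aux2 := ABA_aux D t12 t22 vac lam2
    (fun a b => (b - a + c) / (b - a)) (fun a b => c / (b - a))
    h1212 h2212 hvac2 hid2 M u hu huinj z hz hzu
  rw [← hB] at aux1 aux2
  have hsub : ∀ i, ((List.ofFn fun j => if j = i then (1 : Module.End ℂ V)
      else t12 (u j)).prod) vac = Bsub i := fun i => (hBsub i).symm
  simp only [hsub] at aux1 aux2
  have hmain : (κt • t11 z + κ • t22 z) B =
      Λd • B + ∑ i, ((c / (u i - z)) * Ed i) • (t12 z (Bsub i)) := by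
    have hL : (κt • t11 z + κ • t22 z) B = κt • (t11 z B) + κ • (t22 z B) := rfl
    rw [hL, aux1, aux2]
    have hco : ∀ i, κt • ((c / (z - u i) * lam1 (u i) *
          ∏ j, (if j = i then 1 else (u j - u i + c) / (u j - u i))) • t12 z (Bsub i))
        + κ • ((c / (u i - z) * lam2 (u i) *
          ∏ j, (if j = i then 1 else (u i - u j + c) / (u i - u j))) • t12 z (Bsub i))
        = ((c / (u i - z)) * Ed i) • t12 z (Bsub i) := by
      intro i
      rw [smul_smul, smul_smul, ← add_smul]
      congr 1
      rw [hEd i, ABA_prod_erase_eq_ite, ABA_prod_erase_eq_ite,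
        show z - u i = -(u i - z) from by ring, div_neg]
      ring
    calc κt • ((lam1 z * ∏ i, (u i - z + c) / (u i - z)) • B
          + ∑ i, (c / (z - u i) * lam1 (u i) *
              ∏ j, (if j = i then 1 else (u j - u i + c) / (u j - u i))) • t12 z (Bsub i))
        + κ • ((lam2 z * ∏ i, (z - u i + c) / (z - u i)) • B
          + ∑ i, (c / (u i - z) * lam2 (u i) *
              ∏ j, (if j = i then 1 else (u i - u j + c) / (u i - u j))) • t12 z (Bsub i))
        = (κt • (lam1 z * ∏ i, (u i - z + c) / (u i - z)) • B
            + κ • (lam2 z * ∏ i, (z - u i + c) / (z - u i)) • B)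
          + ∑ i, (κt • ((c / (z - u i) * lam1 (u i) *
              ∏ j, (if j = i then 1 else (u j - u i + c) / (u j - u i))) • t12 z (Bsub i))
            + κ • ((c / (u i - z) * lam2 (u i) *
              ∏ j, (if j = i then 1 else (u i - u j + c) / (u i - u j))) • t12 z (Bsub i))) := by
          simp only [smul_add, Finset.smul_sum, Finset.sum_add_distrib]
          abel
      _ = Λd • B + ∑ i, ((c / (u i - z)) * Ed i) • (t12 z (Bsub i)) := by
          rw [Finset.sum_congr rfl fun i _ => hco i]
          congr 1
          rw [smul_smul, smul_smul, ← add_smul, hΛd]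
          simp only [mul_assoc]
  exact ⟨hmain, fun h => by rw [hmain]; simp [h]⟩
end

section
/- Fix c ∈ ℂ nonzero, N ∈ ℕ, θ_1, …, θ_N ∈ ℂ, positive half-integers s_1, …, s_N, and set S = Σ_{i=1}^N 2s_i. Let κ, κ̃ ∈ ℂ with κ̃ ≠ κ. Let u_1, …, u_M and v_1, …, v_{M̂} be complex numbers, q_+(z) = ∏_{i=1}^M (z−u_i)/c, q_-(z) = ∏_{i=1}^{M̂} (z−v_i)/c, and suppose there is a function Λ_d : ℂ → ℂ such that for all z ∈ ℂ: Λ_d(z) q_+(z) = κ̃ λ_1(z) q_+(z−c) + κ λ_2(z) q_+(z+c) and Λ_d(z) q_-(z) = κ λ_1(z) q_-(z−c) + κ̃ λ_2(z) q_-(z+c). Then M + M̂ = S and the quantum Wronskian identity κ̃ q_+(z−c) q_-(z) − κ q_+(z) q_-(z−c) = (κ̃−κ) λ(z) holds for all z ∈ ℂ; i.e., W_d(z) := (κ̃ q_+(z−c) q_-(z) − κ q_+(z) q_-(z−c))/λ(z) is the constant κ̃−κ. -/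
open Polynomial Finset

lemma telescope_aux (c θi si z : ℂ) (mi : ℕ)
    (hsi : 2 * si = (mi : ℂ)) :
    (z - θi + c * (si + 1 / 2)) / c *
        ∏ k ∈ Finset.Icc 1 mi, (z - θi + c * (si - (k : ℂ) + 1 / 2)) / c
      = (z - θi - c * (si - 1 / 2)) / c *
        ∏ k ∈ Finset.Icc 1 mi, (z + c - θi + c * (si - (k : ℂ) + 1 / 2)) / c := by
  set f : ℕ → ℂ := fun k => (z - θi + c * (si - (k : ℂ) + 1 / 2)) / c with hf
  have h1 : ∏ k ∈ Finset.Icc 1 mi, (z - θi + c * (si - (k : ℂ) + 1 / 2)) / c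
      = ∏ j ∈ Finset.range mi, f (j + 1) := by
    rw [← Finset.Ico_add_one_right_eq_Icc, Finset.prod_Ico_eq_prod_range]
    refine Finset.prod_congr rfl fun j _ => ?_
    simp only [hf]; push_cast; ring
  have h2 : ∏ k ∈ Finset.Icc 1 mi, (z + c - θi + c * (si - (k : ℂ) + 1 / 2)) / c
      = ∏ j ∈ Finset.range mi, f j := by
    rw [← Finset.Ico_add_one_right_eq_Icc, Finset.prod_Ico_eq_prod_range]
    refine Finset.prod_congr rfl fun j _ => ?_
    simp only [hf]; push_cast; ring
  have h0 : (z - θi + c * (si + 1 / 2)) / c = f 0 := by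
    simp only [hf]; norm_num
  have hmtop : (z - θi - c * (si - 1 / 2)) / c = f mi := by
    simp only [hf]; rw [← hsi]; ring
  rw [h1, h2, h0, hmtop, mul_comm (f 0), mul_comm (f mi), ← Finset.prod_range_succ',
    ← Finset.prod_range_succ]

lemma eval_prod_XC {n : ℕ} (w : Fin n → ℂ) (z : ℂ) :
    Polynomial.eval z (∏ i, (Polynomial.X - Polynomial.C (w i))) = ∏ i, (z - w i) := by
  simp [Polynomial.eval_prod]

lemma prod_div_c {n : ℕ} (c : ℂ) (w : Fin n → ℂ) (z : ℂ) :
    ∏ i, (z - w i) / c = (∏ i, (z - w i)) / c ^ n := by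
  rw [Finset.prod_div_distrib, Finset.prod_const, Finset.card_univ, Fintype.card_fin]


noncomputable def shnP (c : ℂ) (n : ℕ) (p : Polynomial ℂ) : Polynomial ℂ :=
  p.comp (Polynomial.X + Polynomial.C ((n : ℂ) * c))

lemma evshnP (c : ℂ) (n : ℕ) (p : ℂ[X]) (z : ℂ) :
    eval z (shnP c n p) = eval (z + n * c) p := by
  simp [shnP, eval_comp]

lemma shnP_zero (c : ℂ) (p : ℂ[X]) : shnP c 0 p = p := by simp [shnP]

lemma shnP_mul (c : ℂ) (n : ℕ) (p q : ℂ[X]) :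
    shnP c n (p * q) = shnP c n p * shnP c n q := mul_comp p q _

lemma shnP_step (c : ℂ) (n : ℕ) (p : ℂ[X]) :
    shnP c n (p.comp (X + C c)) = shnP c (n + 1) p := by
  unfold shnP
  rw [Polynomial.comp_assoc]
  congr 1
  have h : ((n : ℂ)) * c + c = (((n + 1 : ℕ)) : ℂ) * c := by push_cast; ring
  rw [add_comp, X_comp, C_comp, add_assoc, ← C_add, h]

lemma shnP_ne (c : ℂ) (n : ℕ) (p : ℂ[X]) (hp : p ≠ 0) : shnP c n p ≠ 0 := by
  intro hcon
  apply hp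
  refine Polynomial.zero_of_eval_zero p fun x => ?_
  have h1 := evshnP c n p (x - n * c)
  rw [hcon, eval_zero] at h1
  have hx : x - (n : ℂ) * c + (n : ℂ) * c = x := by ring
  rw [hx] at h1
  exact h1.symm


/-- Quantum Wronskian for the diagonally twisted XXX chain: if the two Baxter
Q-polynomials `q₊`, `q₋` solve the two Baxter T-Q equations for a common
eigenvalue `Λ_d`, then `M + M̂ = S = Σ 2sᵢ` and
`κ̃ q₊(z-c) q₋(z) - κ q₊(z) q₋(z-c) = (κ̃-κ) λ(z)` for all `z`. -/
theorem quantum_Wronskian_diagonal (c : ℂ) (hc : c ≠ 0) (N : ℕ) (θ : Fin N → ℂ)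
    (s : Fin N → ℂ) (m : Fin N → ℕ) (hm : ∀ i, 0 < m i)
    (hs : ∀ i, 2 * s i = (m i : ℂ))
    (κ κt : ℂ) (hκ : κt ≠ κ)
    (M Mh : ℕ) (u : Fin M → ℂ) (v : Fin Mh → ℂ)
    (lam1 lam2 lam qp qm : ℂ → ℂ)
    (hlam1 : ∀ z, lam1 z = ∏ i, (z - θ i + c * (s i + 1 / 2)) / c)
    (hlam2 : ∀ z, lam2 z = ∏ i, (z - θ i - c * (s i - 1 / 2)) / c)
    (hlam : ∀ z, lam z =
      ∏ i, ∏ k ∈ Finset.Icc 1 (m i), (z - θ i + c * (s i - (k : ℂ) + 1 / 2)) / c)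
    (hqp : ∀ z, qp z = ∏ i, (z - u i) / c)
    (hqm : ∀ z, qm z = ∏ i, (z - v i) / c)
    (Λd : ℂ → ℂ)
    (hTQp : ∀ z, Λd z * qp z = κt * lam1 z * qp (z - c) + κ * lam2 z * qp (z + c))
    (hTQm : ∀ z, Λd z * qm z = κ * lam1 z * qm (z - c) + κt * lam2 z * qm (z + c)) :
    M + Mh = ∑ i, m i ∧
      ∀ z, κt * qp (z - c) * qm z - κ * qp z * qm (z - c) = (κt - κ) * lam z := by
  classical
  set S : ℕ := ∑ i, m i with hSdef
  -- polynomials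
  set A : ℂ[X] := ∏ i, (X - C (u i + c)) with hA
  set A0 : ℂ[X] := ∏ i, (X - C (u i)) with hA0
  set B : ℂ[X] := ∏ i, (X - C (v i + c)) with hB
  set B0 : ℂ[X] := ∏ i, (X - C (v i)) with hB0
  set R : ℂ[X] := C κt * A * B0 - C κ * A0 * B with hR
  set P : ℂ[X] := C ((c ^ (M + Mh))⁻¹) * R with hP
  set Lb : ℂ[X] :=
    ∏ i, ∏ k ∈ Finset.Icc 1 (m i), (X - C (θ i - c * (s i - (k : ℂ) + 1 / 2))) with hLb
  set L : ℂ[X] := C ((c ^ S)⁻¹) * Lb with hL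
  set L2 : ℂ[X] := C ((c ^ N)⁻¹) * ∏ i, (X - C (θ i + c * (s i - 1 / 2))) with hL2
  have hcM : (c : ℂ) ^ (M + Mh) ≠ 0 := pow_ne_zero _ hc
  have hcS : (c : ℂ) ^ S ≠ 0 := pow_ne_zero _ hc
  -- evaluation lemmas
  have evalP : ∀ z, eval z P = κt * qp (z - c) * qm z - κ * qp z * qm (z - c) := by
    intro z
    rw [hP, hR]
    simp only [eval_mul, eval_sub, eval_C, hA, hA0, hB, hB0, eval_prod_XC]
    rw [hqp, hqp, hqm, hqm, prod_div_c, prod_div_c, prod_div_c, prod_div_c]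
    have e1 : ∏ i, (z - (u i + c)) = ∏ i, (z - c - u i) :=
      Finset.prod_congr rfl fun i _ => by ring
    have e2 : ∏ i, (z - (v i + c)) = ∏ i, (z - c - v i) :=
      Finset.prod_congr rfl fun i _ => by ring
    rw [e1, e2, pow_add]
    ring
  have evalL : ∀ z, eval z L = lam z := by
    intro z
    rw [hL, hLb, hlam]
    simp only [eval_mul, eval_C, eval_prod, eval_sub, eval_X]
    have : ∀ i : Fin N, ∏ k ∈ Finset.Icc 1 (m i), (z - θ i + c * (s i - (k : ℂ) + 1 / 2)) / c
        = (∏ k ∈ Finset.Icc 1 (m i), (z - (θ i - c * (s i - (k : ℂ) + 1 / 2)))) / c ^ (m i) := by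
      intro i
      rw [Finset.prod_div_distrib, Finset.prod_const, Nat.card_Icc, Nat.add_sub_cancel]
      congr 1
      exact Finset.prod_congr rfl fun k _ => by ring
    rw [Finset.prod_congr rfl fun i _ => this i, Finset.prod_div_distrib,
      Finset.prod_pow_eq_pow_sum, ← hSdef]
    ring
  have evalL2 : ∀ z, eval z L2 = lam2 z := by
    intro z
    rw [hL2, hlam2]
    simp only [eval_mul, eval_C, eval_prod_XC]
    have : ∏ i, (z - θ i - c * (s i - 1 / 2)) / c
        = (∏ i, (z - (θ i + c * (s i - 1 / 2)))) / c ^ N := by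
      rw [Finset.prod_div_distrib, Finset.prod_const, Finset.card_univ, Fintype.card_fin]
      congr 1
      exact Finset.prod_congr rfl fun i _ => by ring
    rw [this]
    ring
  -- nonvanishing / degree facts
  have mA : A.Monic := monic_prod_of_monic _ _ fun i _ => monic_X_sub_C _
  have mA0 : A0.Monic := monic_prod_of_monic _ _ fun i _ => monic_X_sub_C _
  have mB : B.Monic := monic_prod_of_monic _ _ fun i _ => monic_X_sub_C _
  have mB0 : B0.Monic := monic_prod_of_monic _ _ fun i _ => monic_X_sub_C _
  have dA : A.natDegree = M := by
    rw [hA, natDegree_prod_of_monic _ _ fun i _ => monic_X_sub_C _]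
    simp only [natDegree_X_sub_C]
    simp
  have dA0 : A0.natDegree = M := by
    rw [hA0, natDegree_prod_of_monic _ _ fun i _ => monic_X_sub_C _]
    simp only [natDegree_X_sub_C]
    simp
  have dB : B.natDegree = Mh := by
    rw [hB, natDegree_prod_of_monic _ _ fun i _ => monic_X_sub_C _]
    simp only [natDegree_X_sub_C]
    simp
  have dB0 : B0.natDegree = Mh := by
    rw [hB0, natDegree_prod_of_monic _ _ fun i _ => monic_X_sub_C _]
    simp only [natDegree_X_sub_C]
    simp
  have mAB : (A * B0).Monic := mA.mul mB0
  have mA0B : (A0 * B).Monic := mA0.mul mB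
  have dAB : (A * B0).natDegree = M + Mh := by
    rw [natDegree_mul mA.ne_zero mB0.ne_zero, dA, dB0]
  have dA0B : (A0 * B).natDegree = M + Mh := by
    rw [natDegree_mul mA0.ne_zero mB.ne_zero, dA0, dB]
  have hcoeffR : R.coeff (M + Mh) = κt - κ := by
    rw [hR, mul_assoc, mul_assoc, sub_eq_add_neg, coeff_add, coeff_neg, coeff_C_mul,
      coeff_C_mul]
    have c1 : (A * B0).coeff (M + Mh) = 1 := by
      have := mAB.coeff_natDegree; rwa [dAB] at this
    have c2 : (A0 * B).coeff (M + Mh) = 1 := by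
      have := mA0B.coeff_natDegree; rwa [dA0B] at this
    rw [c1, c2]; ring
  have hRdeg_le : R.natDegree ≤ M + Mh := by
    rw [hR, mul_assoc, mul_assoc]
    refine le_trans (natDegree_sub_le _ _) (max_le ?_ ?_)
    · exact le_trans (natDegree_C_mul_le _ _) (le_of_eq dAB)
    · exact le_trans (natDegree_C_mul_le _ _) (le_of_eq dA0B)
  have hRdeg : R.natDegree = M + Mh :=
    le_antisymm hRdeg_le (le_natDegree_of_ne_zero (by rw [hcoeffR]; exact sub_ne_zero.mpr hκ))
  have hRne : R ≠ 0 := fun h => (sub_ne_zero.mpr hκ) (by rw [← hcoeffR, h, coeff_zero])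
  have hRlc : R.leadingCoeff = κt - κ := by rw [Polynomial.leadingCoeff, hRdeg, hcoeffR]
  have hPne : P ≠ 0 := mul_ne_zero (by simpa using inv_ne_zero hcM) hRne
  have hPdeg : P.natDegree = M + Mh := by rw [hP, natDegree_C_mul (inv_ne_zero hcM), hRdeg]
  have hPlc : P.leadingCoeff = (c ^ (M + Mh))⁻¹ * (κt - κ) := by
    rw [hP, leadingCoeff_mul, leadingCoeff_C, hRlc]
  have mLb : Lb.Monic := monic_prod_of_monic _ _ fun i _ =>
    monic_prod_of_monic _ _ fun k _ => monic_X_sub_C _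
  have dLb : Lb.natDegree = S := by
    rw [hLb, natDegree_prod_of_monic _ _ fun i _ =>
      monic_prod_of_monic _ _ fun k _ => monic_X_sub_C _]
    rw [hSdef]
    refine Finset.sum_congr rfl fun i _ => ?_
    rw [natDegree_prod_of_monic _ _ fun k _ => monic_X_sub_C _]
    simp only [natDegree_X_sub_C]
    simp [Nat.card_Icc]
  have hLne : L ≠ 0 := mul_ne_zero (by simpa using inv_ne_zero hcS) mLb.ne_zero
  have hLdeg : L.natDegree = S := by rw [hL, natDegree_C_mul (inv_ne_zero hcS), dLb]
  have hLlc : L.leadingCoeff = (c ^ S)⁻¹ := by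
    rw [hL, leadingCoeff_mul, leadingCoeff_C, mLb.leadingCoeff, mul_one]
  have hL2ne : L2 ≠ 0 := mul_ne_zero (by simpa using inv_ne_zero (pow_ne_zero N hc))
    (monic_prod_of_monic _ _ fun i _ => monic_X_sub_C (θ i + c * (s i - 1 / 2))).ne_zero
  clear_value A A0 B B0 R P Lb L L2
  -- pointwise identities
  have key2 : ∀ z, lam1 z * (κt * qp (z - c) * qm z - κ * qp z * qm (z - c))
      = lam2 z * (κt * qp z * qm (z + c) - κ * qp (z + c) * qm z) := by
    intro z
    linear_combination qp z * hTQm z - qm z * hTQp z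
  have key1 : ∀ z, lam1 z * lam z = lam2 z * lam (z + c) := by
    intro z
    rw [hlam1, hlam2, hlam z, hlam (z + c), ← Finset.prod_mul_distrib,
      ← Finset.prod_mul_distrib]
    exact Finset.prod_congr rfl fun i _ => telescope_aux c (θ i) (s i) z (m i) (hs i)
  have keyW : ∀ z, lam2 z ≠ 0 →
      lam (z + c) * (κt * qp (z - c) * qm z - κ * qp z * qm (z - c))
        = lam z * (κt * qp (z + c - c) * qm (z + c) - κ * qp (z + c) * qm (z + c - c)) := by
    intro z hz2
    have hcc : z + c - c = z := by ring
    rw [hcc]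
    apply mul_left_cancel₀ hz2
    calc lam2 z * (lam (z + c) * (κt * qp (z - c) * qm z - κ * qp z * qm (z - c)))
        = (lam2 z * lam (z + c)) * (κt * qp (z - c) * qm z - κ * qp z * qm (z - c)) := by ring
      _ = (lam1 z * lam z) * (κt * qp (z - c) * qm z - κ * qp z * qm (z - c)) := by rw [key1]
      _ = lam z * (lam1 z * (κt * qp (z - c) * qm z - κ * qp z * qm (z - c))) := by ring
      _ = lam z * (lam2 z * (κt * qp z * qm (z + c) - κ * qp (z + c) * qm z)) := by rw [key2]
      _ = lam2 z * (lam z * (κt * qp z * qm (z + c) - κ * qp (z + c) * qm z)) := by ring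
  -- polynomial functional equation
  have evsh : ∀ (p : ℂ[X]) (a z : ℂ), eval z (p.comp (X + C a)) = eval (z + a) p := by
    intro p a z; simp [eval_comp]
  have E : L.comp (X + C c) * P = L * (P.comp (X + C c)) := by
    apply Polynomial.eq_of_infinite_eval_eq
    apply Set.Infinite.mono _ ((Polynomial.finite_setOf_isRoot hL2ne).infinite_compl)
    intro z hz
    have hz2 : lam2 z ≠ 0 := by
      rw [← evalL2]
      exact hz
    simp only [Set.mem_setOf_eq, eval_mul, evsh, evalP, evalL]
    exact keyW z hz2
  have iter : ∀ n : ℕ, shnP c n L * P = L * shnP c n P := by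
    intro n
    induction n with
    | zero => rw [shnP_zero, shnP_zero]
    | succ n ih =>
      have En : shnP c (n + 1) L * shnP c n P = shnP c n L * shnP c (n + 1) P := by
        have := congrArg (shnP c n) E
        rw [shnP_mul c n (L.comp (X + C c)) P, shnP_mul c n L (P.comp (X + C c)), shnP_step, shnP_step] at this
        exact this
      have h1 : shnP c (n + 1) L * P * (shnP c n L * shnP c n P)
          = L * shnP c (n + 1) P * (shnP c n L * shnP c n P) := by
        calc shnP c (n + 1) L * P * (shnP c n L * shnP c n P)
            = (shnP c (n + 1) L * shnP c n P) * (shnP c n L * P) := by ring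
          _ = (shnP c n L * shnP c (n + 1) P) * (L * shnP c n P) := by rw [En, ih]
          _ = L * shnP c (n + 1) P * (shnP c n L * shnP c n P) := by ring
      exact mul_right_cancel₀ (mul_ne_zero (shnP_ne c n L hLne) (shnP_ne c n P hPne)) h1
  -- pick a point z₀ with lam z₀ ≠ 0
  obtain ⟨z₀, hz₀⟩ := ((Polynomial.finite_setOf_isRoot hLne).infinite_compl).nonempty
  have hz₀L : eval z₀ L ≠ 0 := hz₀
  -- Q = 0
  have hQ : C (eval z₀ L) * P - C (eval z₀ P) * L = 0 := by
    apply Polynomial.eq_of_infinite_eval_eq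
    have hinj : Function.Injective (fun n : ℕ => z₀ + (n : ℂ) * c) := by
      intro a b hab
      simp only at hab
      have h1 : (a : ℂ) * c = (b : ℂ) * c := by
        have := add_left_cancel hab
        exact this
      have : (a : ℂ) = b := mul_right_cancel₀ hc h1
      exact_mod_cast this
    apply Set.infinite_of_injective_forall_mem hinj
    intro n
    simp only [Set.mem_setOf_eq, eval_zero, eval_sub, eval_mul, eval_C]
    have h2 := congrArg (eval z₀) (iter n)
    simp only [eval_mul, evshnP] at h2
    linear_combination -h2
  rw [sub_eq_zero] at hQ
  -- degree count
  have hPz₀ : eval z₀ P ≠ 0 := by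
    intro h
    rw [h, map_zero, zero_mul] at hQ
    exact hPne (by
      have := mul_eq_zero.mp hQ
      rcases this with h' | h'
      · exact absurd (C_eq_zero.mp h') hz₀L
      · exact h')
  have hdeg : M + Mh = S := by
    have := congrArg natDegree hQ
    rwa [natDegree_C_mul hz₀L, natDegree_C_mul hPz₀, hPdeg, hLdeg] at this
  -- leading coefficient
  have hlc := congrArg Polynomial.leadingCoeff hQ
  rw [leadingCoeff_mul, leadingCoeff_mul, leadingCoeff_C, leadingCoeff_C, hPlc, hLlc,
    hdeg] at hlc
  have hevP : eval z₀ P = eval z₀ L * (κt - κ) := by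
    field_simp at hlc
    linear_combination -hlc
  have hPL : P = C (κt - κ) * L := by
    have h2 : C (eval z₀ L) * P = C (eval z₀ L) * (C (κt - κ) * L) := by
      rw [hQ, hevP, map_mul]
      ring
    exact mul_left_cancel₀ (fun h => hz₀L (C_eq_zero.mp h)) h2
  constructor
  · exact hdeg
  · intro z
    have := congrArg (eval z) hPL
    rwa [evalP, eval_mul, eval_C, evalL] at this
end

section
/- Let κ, κ̃, κ⁺, κ⁻, ρ_1, ρ_2 ∈ ℂ with κ⁺κ⁻ ≠ 0 and ρ_1ρ_2 ≠ κ⁺κ⁻, and set μ = 1/(1 − ρ_1ρ_2/(κ⁺κ⁻)). Let σ ∈ ℂ with σ² = μ, and define the 2×2 complex matrices A = σ·[[1, ρ_2/κ⁻],[ρ_1/κ⁺, 1]], B = σ·[[1, ρ_1/κ⁻],[ρ_2/κ⁺, 1]], D = diag(κ̃−ρ_1, κ−ρ_2), K = [[κ̃, κ⁺],[κ⁻, κ]]. If the constraint κ⁺κ⁻ − (ρ_1 κ + ρ_2 κ̃) + ρ_1ρ_2 = 0 holds, then B D A = K. -/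
/-- Factorization of the generic twist matrix `K = [[κ̃, κ⁺],[κ⁻, κ]]` as `K = B D A`
with diagonal `D = diag(κ̃-ρ₁, κ-ρ₂)`, provided the constraint
`κ⁺κ⁻ - (ρ₁κ + ρ₂κ̃) + ρ₁ρ₂ = 0` holds. Here `σ² = μ = 1/(1 - ρ₁ρ₂/(κ⁺κ⁻))`. -/
theorem twist_factorization (κ κt κp κm ρ1 ρ2 μ σ : ℂ)
    (hκ : κp * κm ≠ 0) (hρ : ρ1 * ρ2 ≠ κp * κm)
    (hμ : μ = 1 / (1 - ρ1 * ρ2 / (κp * κm))) (hσ : σ ^ 2 = μ)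
    (hconstraint : κp * κm - (ρ1 * κ + ρ2 * κt) + ρ1 * ρ2 = 0) :
    (σ • !![(1 : ℂ), ρ1 / κm; ρ2 / κp, 1]) * !![κt - ρ1, 0; 0, κ - ρ2] *
        (σ • !![(1 : ℂ), ρ2 / κm; ρ1 / κp, 1])
      = !![κt, κp; κm, κ] := by
  have hp : κp ≠ 0 := fun h => hκ (by simp [h])
  have hm : κm ≠ 0 := fun h => hκ (by simp [h])
  have hd : κp * κm - ρ1 * ρ2 ≠ 0 := sub_ne_zero.mpr (Ne.symm hρ)
  have hc : σ ^ 2 = κp * κm / (κp * κm - ρ1 * ρ2) := by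
    rw [hσ, hμ]; field_simp
  have key : (σ • !![(1 : ℂ), ρ1 / κm; ρ2 / κp, 1]) * !![κt - ρ1, 0; 0, κ - ρ2] *
        (σ • !![(1 : ℂ), ρ2 / κm; ρ1 / κp, 1])
      = σ ^ 2 • (!![(1 : ℂ), ρ1 / κm; ρ2 / κp, 1] * !![κt - ρ1, 0; 0, κ - ρ2] *
        !![(1 : ℂ), ρ2 / κm; ρ1 / κp, 1]) := by
    rw [Matrix.smul_mul, Matrix.smul_mul, Matrix.mul_smul, smul_smul, sq]
  rw [key, hc]
  ext i j
  fin_cases i <;> fin_cases j <;>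
    simp [Matrix.mul_apply, Fin.sum_univ_succ] <;>
    field_simp <;>
    first
      | linear_combination (-(κp * κm * ρ1)) * hconstraint
      | linear_combination (-(κp * κm * ρ2)) * hconstraint
      | linear_combination (-(κp * κm)) * hconstraint
      | linear_combination (-ρ1) * hconstraint
      | linear_combination (-ρ2) * hconstraint
      | linear_combination (-1 : ℂ) * hconstraint
end

section
/- Let V be a ℂ-vector space, t_{11}, t_{12}, t_{21}, t_{22} : D → End(V) (D ⊆ ℂ), |0⟩ ∈ V, and λ_1, λ_2 : D → ℂ with t_{11}(z)|0⟩ = λ_1(z)|0⟩, t_{22}(z)|0⟩ = λ_2(z)|0⟩, and t_{21}(z)|0⟩ = 0 for all z ∈ D. Let κ⁺, κ⁻, ρ_1, ρ_2 ∈ ℂ with κ⁺κ⁻ ≠ 0, ρ_1ρ_2 ≠ κ⁺κ⁻, μ = 1/(1 − ρ_1ρ_2/(κ⁺κ⁻)), and define the modified operators ν_{11}(z) = μ(t_{11}(z) + (ρ_2/κ⁺)t_{12}(z) + (ρ_2/κ⁻)t_{21}(z) + (ρ_2²/(κ⁻κ⁺))t_{22}(z)), ν_{22}(z) = μ(t_{22}(z)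 + (ρ_1/κ⁺)t_{12}(z) + (ρ_1/κ⁻)t_{21}(z) + (ρ_1²/(κ⁻κ⁺))t_{11}(z)), ν_{12}(z) = μ(t_{12}(z) + (ρ_1/κ⁻)t_{11}(z) + (ρ_2/κ⁻)t_{22}(z) + (ρ_1ρ_2/(κ⁻)²)t_{21}(z)), ν_{21}(z) = μ(t_{21}(z) + (ρ_1/κ⁺)t_{11}(z) + (ρ_2/κ⁺)t_{22}(z) + (ρ_1ρ_2/(κ⁺)²)t_{12}(z)). Then for all z ∈ D: ν_{11}(z)|0⟩ = λ_1(z)|0⟩ + (ρ_2/κ⁺) ν_{12}(z)|0⟩; ν_{22}(z)|0⟩ = λ_2(z)|0⟩ + (ρ_1/κ⁺) ν_{12}(z)|0⟩; ν_{21}(z)|0⟩ = ((ρ_1/κ⁺)λ_1(z) + (ρ_2/κ⁺)λ_2(z))|0⟩ + (ρ_1ρ_2/(κ⁺)²) ν_{12}(z)|0⟩. -/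
set_option maxHeartbeats 1000000 in


/-- Action of the modified operators on the highest weight vector `|0⟩`:
with `ν₁₂` as modified creation operator,
`ν₁₁(z)|0⟩ = λ₁(z)|0⟩ + (ρ₂/κ⁺) ν₁₂(z)|0⟩`,
`ν₂₂(z)|0⟩ = λ₂(z)|0⟩ + (ρ₁/κ⁺) ν₁₂(z)|0⟩`, and
`ν₂₁(z)|0⟩ = ((ρ₁/κ⁺)λ₁(z) + (ρ₂/κ⁺)λ₂(z))|0⟩ + (ρ₁ρ₂/(κ⁺)²) ν₁₂(z)|0⟩`. -/
theorem modified_operators_on_highest_weight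
    {V : Type*} [AddCommGroup V] [Module ℂ V]
    (D : Set ℂ) (t11 t12 t21 t22 : ℂ → Module.End ℂ V)
    (vac : V) (lam1 lam2 : ℂ → ℂ)
    (hvac1 : ∀ z ∈ D, t11 z vac = lam1 z • vac)
    (hvac2 : ∀ z ∈ D, t22 z vac = lam2 z • vac)
    (hvac3 : ∀ z ∈ D, t21 z vac = 0)
    (κp κm ρ1 ρ2 μ : ℂ) (hκ : κp * κm ≠ 0) (hρ : ρ1 * ρ2 ≠ κp * κm)
    (hμ : μ = 1 / (1 - ρ1 * ρ2 / (κp * κm)))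
    (ν11 ν22 ν12 ν21 : ℂ → Module.End ℂ V)
    (hν11 : ∀ z, ν11 z = μ • (t11 z + (ρ2 / κp) • t12 z + (ρ2 / κm) • t21 z
        + (ρ2 ^ 2 / (κm * κp)) • t22 z))
    (hν22 : ∀ z, ν22 z = μ • (t22 z + (ρ1 / κp) • t12 z + (ρ1 / κm) • t21 z
        + (ρ1 ^ 2 / (κm * κp)) • t11 z))
    (hν12 : ∀ z, ν12 z = μ • (t12 z + (ρ1 / κm) • t11 z + (ρ2 / κm) • t22 z
        + (ρ1 * ρ2 / κm ^ 2) • t21 z))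
    (hν21 : ∀ z, ν21 z = μ • (t21 z + (ρ1 / κp) • t11 z + (ρ2 / κp) • t22 z
        + (ρ1 * ρ2 / κp ^ 2) • t12 z)) :
    ∀ z ∈ D,
      ν11 z vac = lam1 z • vac + (ρ2 / κp) • (ν12 z vac) ∧
      ν22 z vac = lam2 z • vac + (ρ1 / κp) • (ν12 z vac) ∧
      ν21 z vac = ((ρ1 / κp) * lam1 z + (ρ2 / κp) * lam2 z) • vac
        + (ρ1 * ρ2 / κp ^ 2) • (ν12 z vac) := by
  intro z hz
  have hκp : κp ≠ 0 := fun h => hκ (by rw [h]; ring_nf)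
  have hκm : κm ≠ 0 := fun h => hκ (by rw [h]; ring_nf)
  have hd : (1 : ℂ) - ρ1 * ρ2 / (κp * κm) ≠ 0 := by
    intro h
    apply hρ
    field_simp at h
    linear_combination -h
  have hμ' : μ * (κp * κm - ρ1 * ρ2) = κp * κm := by
    rw [hμ, div_mul_eq_mul_div, div_eq_iff hd]
    field_simp
  have hμd : μ * (ρ1 * ρ2 / (κp * κm)) = μ - 1 := by
    field_simp
    linear_combination -hμ'
  simp only [hν11, hν22, hν12, hν21, LinearMap.smul_apply, LinearMap.add_apply,
    hvac1 z hz, hvac2 z hz, hvac3 z hz, smul_zero, add_zero, smul_add, smul_smul]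
  refine ⟨?_, ?_, ?_⟩
  · match_scalars
    all_goals first
      | ring1
      | linear_combination (-lam1 z) * hμd
  · match_scalars
    all_goals first
      | ring1
      | linear_combination (-lam2 z) * hμd
  · match_scalars
    all_goals first
      | ring1
      | linear_combination (-(ρ1 * lam1 z + ρ2 * lam2 z) / κp) * hμd
end

section
/- Let V be a ℂ-vector space and t_{11}, t_{12}, t_{21}, t_{22} : D → End(V) (D ⊆ ℂ). Let κ, κ̃, κ⁺, κ⁻, ρ_1, ρ_2 ∈ ℂ with κ⁺κ⁻ ≠ 0, ρ_1ρ_2 ≠ κ⁺κ⁻, μ = 1/(1 − ρ_1ρ_2/(κ⁺κ⁻)), and define ν_{12}(z) = μ(t_{12}(z) + (ρ_1/κ⁻)t_{11}(z) + (ρ_2/κ⁻)t_{22}(z) + (ρ_1ρ_2/(κ⁻)²)t_{21}(z)), ν_{21}(z) = μ(t_{21}(z) + (ρ_1/κ⁺)t_{11}(z) + (ρ_2/κ⁺)t_{22}(z) + (ρ_1ρ_2/(κ⁺)²)t_{12}(z)), and t(z) = κ̃ t_{11}(z) + κ t_{22}(z) + κ⁺ t_{21}(z) + κ⁻ t_{12}(z).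 (i) If |0⟩ ∈ V and λ_1, λ_2 : D → ℂ satisfy t_{11}(z)|0⟩ = λ_1(z)|0⟩, t_{22}(z)|0⟩ = λ_2(z)|0⟩, t_{21}(z)|0⟩ = 0, then t(z)|0⟩ = ((κ̃−ρ_1)λ_1(z) + (κ−ρ_2)λ_2(z))|0⟩ + (κ⁻/μ) ν_{12}(z)|0⟩. (ii) If |0̂⟩ ∈ V satisfies t_{11}(z)|0̂⟩ = λ_2(z)|0̂⟩, t_{22}(z)|0̂⟩ = λ_1(z)|0̂⟩, t_{12}(z)|0̂⟩ = 0, then t(z)|0̂⟩ = ((κ̃−ρ_1)λ_2(z) + (κ−ρ_2)λ_1(z))|0̂⟩ + (κ⁺/μ) ν_{21}(z)|0̂⟩. -/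
/-- Deformed action of the non-diagonally twisted transfer matrix
`t(z) = κ̃ t₁₁(z) + κ t₂₂(z) + κ⁺ t₂₁(z) + κ⁻ t₁₂(z)` on the highest and lowest
weight vectors, in terms of the modified creation operators `ν₁₂`, `ν₂₁`. -/
theorem twisted_transfer_matrix_on_weight_vectors
    {V : Type*} [AddCommGroup V] [Module ℂ V]
    (D : Set ℂ) (t11 t12 t21 t22 : ℂ → Module.End ℂ V)
    (κ κt κp κm ρ1 ρ2 μ : ℂ) (hκ : κp * κm ≠ 0) (hρ : ρ1 * ρ2 ≠ κp * κm)
    (hμ : μ = 1 / (1 - ρ1 * ρ2 / (κp * κm)))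
    (ν12 ν21 : ℂ → Module.End ℂ V)
    (hν12 : ∀ z, ν12 z = μ • (t12 z + (ρ1 / κm) • t11 z + (ρ2 / κm) • t22 z
        + (ρ1 * ρ2 / κm ^ 2) • t21 z))
    (hν21 : ∀ z, ν21 z = μ • (t21 z + (ρ1 / κp) • t11 z + (ρ2 / κp) • t22 z
        + (ρ1 * ρ2 / κp ^ 2) • t12 z))
    (t : ℂ → Module.End ℂ V)
    (ht : ∀ z, t z = κt • t11 z + κ • t22 z + κp • t21 z + κm • t12 z)
    (lam1 lam2 : ℂ → ℂ) :
    (∀ vac : V, (∀ z ∈ D, t11 z vac = lam1 z • vac) →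
      (∀ z ∈ D, t22 z vac = lam2 z • vac) → (∀ z ∈ D, t21 z vac = 0) →
      ∀ z ∈ D, t z vac = ((κt - ρ1) * lam1 z + (κ - ρ2) * lam2 z) • vac
        + (κm / μ) • (ν12 z vac)) ∧
    (∀ vach : V, (∀ z ∈ D, t11 z vach = lam2 z • vach) →
      (∀ z ∈ D, t22 z vach = lam1 z • vach) → (∀ z ∈ D, t12 z vach = 0) →
      ∀ z ∈ D, t z vach = ((κt - ρ1) * lam2 z + (κ - ρ2) * lam1 z) • vach
        + (κp / μ) • (ν21 z vach)) := by
  have hκp : κp ≠ 0 := fun h => hκ (by simp [h])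
  have hκm : κm ≠ 0 := fun h => hκ (by simp [h])
  have hμn : μ ≠ 0 := by
    rw [hμ]
    have : 1 - ρ1 * ρ2 / (κp * κm) ≠ 0 := by
      intro h
      apply hρ
      field_simp at h
      linear_combination -h
    simp [this]
  constructor
  · intro vac h1 h2 h3 z hz
    rw [ht, hν12]
    simp only [LinearMap.add_apply, LinearMap.smul_apply, h1 z hz, h2 z hz, h3 z hz,
      smul_zero, add_zero]
    match_scalars <;> field_simp <;> ring
  · intro vach h1 h2 h3 z hz
    rw [ht, hν21]
    simp only [LinearMap.add_apply, LinearMap.smul_apply, h1 z hz, h2 z hz, h3 z hz,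
      smul_zero, add_zero]
    match_scalars <;> field_simp <;> ring
end

section
/- Let V be a ℂ-vector space, c ∈ ℂ nonzero, S ∈ ℕ, τ ∈ ℂ nonzero, and F : ℂ → ℂ a polynomial. Let ν : ℂ → End(V) satisfy ν(z)ν(w) = ν(w)ν(z) for all z, w, and suppose there exist P_0, …, P_S ∈ End(V) with P_S = (τ c^S)^{−1}·id such that, setting P(z) = Σ_{k=0}^S P_k z^k, one has P(z)ν(w) = ν(w)P(z) for all z, w and ν(z)P(z) = F(z)·id for all z ∈ ℂ. Then for any pairwise distinct u_1, …, u_S ∈ ℂ and any z ∈ ℂ with z ≠ u_i for all i: ν(z) ∏_{i=1}^S ν(u_i) = τ ( F(z) g(z,ū) ∏_{i=1}^S ν(u_i) + Σ_{i=1}^S g(u_i,z) F(u_i) g(u_i,ū_i) ν(z) ∏_{j≠i} ν(u_j) ). -/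
open Finset Polynomial

private lemma list_prod_extract {M : Type*} [Monoid M] :
    ∀ {n : ℕ} (f : Fin n → M), (∀ a b, Commute (f a) (f b)) → ∀ (i : Fin n),
      (List.ofFn f).prod = f i * (List.ofFn fun j => if j = i then 1 else f j).prod := by
  intro n
  induction n with
  | zero => exact fun f _ i => i.elim0
  | succ n ih =>
    intro f hf i
    rw [List.ofFn_succ, List.ofFn_succ, List.prod_cons, List.prod_cons]
    induction i using Fin.cases with
    | zero =>
      simp [Fin.succ_ne_zero]
    | succ k =>
      have h1 : ∀ j : Fin n, (if j.succ = k.succ then (1 : M) else f j.succ)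
          = (if j = k then (1 : M) else f j.succ) := by
        intro j; simp [Fin.succ_inj]
      have h0 : (if (0 : Fin (n+1)) = k.succ then (1 : M) else f 0) = f 0 := by
        simp [(Fin.succ_ne_zero k).symm]
      rw [h0]
      simp_rw [h1]
      rw [ih (fun j => f j.succ) (fun a b => hf a.succ b.succ) k, ← mul_assoc,
        (hf 0 k.succ).eq, mul_assoc]

private lemma lagrange_pow_sum {S : ℕ} (u : Fin S → ℂ) (huinj : Function.Injective u)
    (z : ℂ) (k : ℕ) (hk : k ≤ S) :
    ∑ i, (∏ j ∈ univ.erase i, (z - u j) / (u i - u j)) * u i ^ k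
      = z ^ k - (if k = S then ∏ i, (z - u i) else 0) := by
  classical
  have hinj : Set.InjOn u (Finset.univ : Finset (Fin S)) := fun a _ b _ h => huinj h
  have hcard : (#(Finset.univ : Finset (Fin S)) : ℕ) = S := by simp
  set q : ℂ[X] := X ^ k - (if k = S then Lagrange.nodal Finset.univ u else 0) with hq
  have hdeg : q.degree < (#(Finset.univ : Finset (Fin S)) : ℕ) := by
    rw [hcard]
    by_cases hkS : k = S
    · subst hkS
      simp only [hq, if_pos rfl]
      have h1 : (X ^ k : ℂ[X]).degree = (Lagrange.nodal Finset.univ u).degree := by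
        rw [degree_X_pow, Lagrange.degree_nodal, hcard]
      have h2 : (X ^ k : ℂ[X]).leadingCoeff = (Lagrange.nodal Finset.univ u).leadingCoeff := by
        rw [monic_X_pow, Lagrange.nodal_monic]
      have := Polynomial.degree_sub_lt h1 (pow_ne_zero k X_ne_zero) h2
      rwa [degree_X_pow] at this
    · simp only [hq, if_neg hkS, sub_zero, degree_X_pow]
      exact_mod_cast lt_of_le_of_ne hk hkS
  have hrep := Lagrange.eq_interpolate hinj hdeg
  have heval : q.eval z = ∑ i, q.eval (u i) * (Lagrange.basis Finset.univ u i).eval z := by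
    conv_lhs => rw [hrep]
    simp [Lagrange.interpolate_apply, eval_finset_sum]
  have hqnode : ∀ i : Fin S, q.eval (u i) = u i ^ k := by
    intro i
    simp only [hq, eval_sub, eval_pow, eval_X]
    by_cases hkS : k = S
    · rw [if_pos hkS, Lagrange.eval_nodal_at_node (mem_univ i), sub_zero]
    · rw [if_neg hkS, eval_zero, sub_zero]
  have hqz : q.eval z = z ^ k - (if k = S then ∏ i, (z - u i) else 0) := by
    simp only [hq, eval_sub, eval_pow, eval_X]
    by_cases hkS : k = S
    · rw [if_pos hkS, if_pos hkS, Lagrange.eval_nodal]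
    · rw [if_neg hkS, if_neg hkS, eval_zero]
  have hbasis : ∀ i : Fin S, (Lagrange.basis Finset.univ u i).eval z
      = ∏ j ∈ univ.erase i, (z - u j) / (u i - u j) := by
    intro i
    rw [Lagrange.basis, eval_prod]
    refine Finset.prod_congr rfl fun j hj => ?_
    rw [Lagrange.basisDivisor]
    simp [div_eq_inv_mul, mul_comm]
  rw [← hqz, heval]
  refine Finset.sum_congr rfl fun i _ => ?_
  rw [hqnode, hbasis, mul_comm]

set_option maxHeartbeats 1000000 in

open Finset in
/-- Abstract form of the multiple-product identity for a null twisted transfer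
matrix `ν(z)` (Theorem on the product of `S+1` operators `ν`): if the commuting
family `ν` admits a commuting operator-valued polynomial inverse
`P(z) = Σ_{k=0}^S P_k z^k` with `P_S = (τ c^S)⁻¹·id` and `ν(z)P(z) = F(z)·id`,
then `ν(z) ∏ᵢ ν(uᵢ) = τ (F(z) g(z,ū) ∏ᵢ ν(uᵢ) + Σᵢ g(uᵢ,z) F(uᵢ) g(uᵢ,ūᵢ) ν(z) ∏_{j≠i} ν(uⱼ))`
for pairwise distinct `u₁,…,u_S` and `z` away from them, where `g(u,v) = c/(u-v)`. -/
theorem null_transfer_matrix_multiple_product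
    {V : Type*} [AddCommGroup V] [Module ℂ V]
    (c : ℂ) (hc : c ≠ 0) (S : ℕ) (τ : ℂ) (hτ : τ ≠ 0) (F : Polynomial ℂ)
    (ν : ℂ → Module.End ℂ V)
    (hνν : ∀ z w, ν z * ν w = ν w * ν z)
    (P : Fin (S + 1) → Module.End ℂ V)
    (hPS : P (Fin.last S) = (τ * c ^ S)⁻¹ • (1 : Module.End ℂ V))
    (hPν : ∀ z w : ℂ, (∑ k : Fin (S + 1), z ^ (k : ℕ) • P k) * ν w = ν w * (∑ k : Fin (S + 1), z ^ (k : ℕ) • P k))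
    (hνP : ∀ z : ℂ, ν z * (∑ k : Fin (S + 1), z ^ (k : ℕ) • P k) = F.eval z • (1 : Module.End ℂ V))
    (u : Fin S → ℂ) (huinj : Function.Injective u)
    (z : ℂ) (hzu : ∀ i, z ≠ u i) :
    ν z * (List.ofFn fun i => ν (u i)).prod =
      τ • ((F.eval z * ∏ i, c / (z - u i)) • (List.ofFn fun i => ν (u i)).prod
        + ∑ i, ((c / (u i - z)) * F.eval (u i) * ∏ j ∈ univ.erase i, c / (u i - u j)) •
            (ν z * (List.ofFn fun j => if j = i then (1 : Module.End ℂ V) else ν (u j)).prod)) := by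
  classical
  -- notation
  set p : ℂ → Module.End ℂ V := fun w => ∑ k : Fin (S + 1), w ^ (k : ℕ) • P k with hp
  set Pi0 : Module.End ℂ V := (List.ofFn fun i => ν (u i)).prod with hPi0
  set Pie : Fin S → Module.End ℂ V :=
    fun i => (List.ofFn fun j => if j = i then (1 : Module.End ℂ V) else ν (u j)).prod with hPie
  have hzu' : ∀ i, z - u i ≠ 0 := fun i => sub_ne_zero.mpr (hzu i)
  have huz : ∀ i, u i - z ≠ 0 := fun i => sub_ne_zero.mpr fun h => hzu i h.symm
  have huu : ∀ i j : Fin S, j ≠ i → u i - u j ≠ 0 := fun i j hji =>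
    sub_ne_zero.mpr fun h => hji (huinj h.symm)
  set D : ℂ := ∏ i, (z - u i) with hDdef
  have hDne : D ≠ 0 := Finset.prod_ne_zero_iff.mpr fun i _ => hzu' i
  set L : Fin S → ℂ := fun i => ∏ j ∈ univ.erase i, (z - u j) / (u i - u j) with hL
  have hτc : τ * c ^ S ≠ 0 := mul_ne_zero hτ (pow_ne_zero _ hc)
  set a : ℂ := (τ * c ^ S)⁻¹ * D with ha
  have hane : a ≠ 0 := mul_ne_zero (inv_ne_zero hτc) hDne
  -- restated hypotheses
  have hPν' : ∀ w x : ℂ, p w * ν x = ν x * p w := fun w x => hPν w x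
  have hpν_self : ∀ w : ℂ, p w * ν w = F.eval w • (1 : Module.End ℂ V) :=
    fun w => (hPν' w w).trans (hνP w)
  -- extraction of one factor from the product
  have hdec : ∀ i, Pi0 = ν (u i) * Pie i := by
    intro i
    exact list_prod_extract (fun i => ν (u i)) (fun a b => hνν (u a) (u b)) i
  have hpPi : ∀ i, p (u i) * Pi0 = F.eval (u i) • Pie i := by
    intro i
    rw [hdec i, ← mul_assoc, hpν_self, smul_mul_assoc, one_mul]
  -- the operator Lagrange interpolation identity
  have hstar : p z = (∑ i, L i • p (u i)) + a • (1 : Module.End ℂ V) := by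
    have h1 : a • (1 : Module.End ℂ V) = D • P (Fin.last S) := by
      rw [hPS, smul_smul, ha, mul_comm]
    have h3 : (∑ i, L i • p (u i))
        = ∑ k : Fin (S + 1), (z ^ (k : ℕ) - if (k : ℕ) = S then D else 0) • P k := by
      simp only [hp, Finset.smul_sum, smul_smul]
      rw [Finset.sum_comm]
      refine Finset.sum_congr rfl fun k _ => ?_
      rw [← Finset.sum_smul, hL, hDdef,
        lagrange_pow_sum u huinj z (k : ℕ) (Nat.lt_succ_iff.mp k.isLt)]
    rw [h1, h3]
    have h4 : ∀ k : Fin (S + 1),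
        (z ^ (k : ℕ) - if (k : ℕ) = S then D else 0) • P k
          = z ^ (k : ℕ) • P k - (if k = Fin.last S then D • P k else 0) := by
      intro k
      have hiff : (k : ℕ) = S ↔ k = Fin.last S := by
        rw [Fin.ext_iff, Fin.val_last]
      by_cases hk : (k : ℕ) = S
      · rw [if_pos hk, if_pos (hiff.mp hk), sub_smul]
      · rw [if_neg hk, if_neg (fun h => hk (hiff.mpr h)), sub_zero, sub_zero]
    simp only [h4]
    rw [Finset.sum_sub_distrib, Finset.sum_ite_eq' Finset.univ (Fin.last S)
      (fun k => D • P k), if_pos (Finset.mem_univ _)]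
    simp [hp]
  -- key identity
  have key : F.eval z • Pi0
      = (∑ i, (L i * F.eval (u i)) • (ν z * Pie i)) + a • (ν z * Pi0) := by
    calc F.eval z • Pi0 = (p z * ν z) * Pi0 := by
          rw [hpν_self, smul_mul_assoc, one_mul]
      _ = p z * (ν z * Pi0) := by rw [mul_assoc]
      _ = (∑ i, L i • p (u i)) * (ν z * Pi0) + a • (ν z * Pi0) := by
          rw [hstar, add_mul, smul_mul_assoc, one_mul]
      _ = (∑ i, (L i * F.eval (u i)) • (ν z * Pie i)) + a • (ν z * Pi0) := by
          congr 1
          rw [Finset.sum_mul]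
          refine Finset.sum_congr rfl fun i _ => ?_
          rw [smul_mul_assoc, ← mul_assoc, hPν' (u i) z, mul_assoc, hpPi i,
            mul_smul_comm, smul_smul]
  have h4 : a • (ν z * Pi0)
      = F.eval z • Pi0 - ∑ i, (L i * F.eval (u i)) • (ν z * Pie i) := by
    rw [key, add_sub_cancel_left]
  have hsolve : ν z * Pi0
      = (a⁻¹ * F.eval z) • Pi0 - ∑ i, (a⁻¹ * (L i * F.eval (u i))) • (ν z * Pie i) := by
    have h5 := congrArg (fun x => a⁻¹ • x) h4
    simp only [smul_smul, inv_mul_cancel₀ hane, one_smul, smul_sub, Finset.smul_sum] at h5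
    exact h5
  rw [hsolve]
  -- now match scalars
  rw [smul_add, Finset.smul_sum]
  have s1 : (a⁻¹ * F.eval z) = τ • (F.eval z * ∏ i, c / (z - u i)) := by
    have : (∏ i, c / (z - u i)) = c ^ S / D := by
      rw [Finset.prod_div_distrib, Finset.prod_const, Finset.card_univ, Fintype.card_fin, hDdef]
    rw [this, ha, smul_eq_mul]
    field_simp
  have s2 : ∀ i, (a⁻¹ * (L i * F.eval (u i)))
      = -(τ • ((c / (u i - z)) * F.eval (u i) * ∏ j ∈ univ.erase i, c / (u i - u j))) := by
    intro i
    have hDsplit : D = (z - u i) * ∏ j ∈ univ.erase i, (z - u j) := by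
      rw [hDdef]; exact (Finset.mul_prod_erase _ _ (Finset.mem_univ i)).symm
    have hcsplit : c ^ S = c * ∏ _j ∈ univ.erase i, c := by
      calc c ^ S = ∏ _j : Fin S, c := by
            rw [Finset.prod_const, Finset.card_univ, Fintype.card_fin]
        _ = c * ∏ _j ∈ univ.erase i, c :=
            (Finset.mul_prod_erase _ _ (Finset.mem_univ i)).symm
    have hL' : L i = (∏ j ∈ univ.erase i, (z - u j)) / (∏ j ∈ univ.erase i, (u i - u j)) := by
      simp only [hL]; exact Finset.prod_div_distrib _ _
    have hC : (∏ j ∈ univ.erase i, c / (u i - u j))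
        = (∏ _j ∈ univ.erase i, c) / (∏ j ∈ univ.erase i, (u i - u j)) :=
      Finset.prod_div_distrib _ _
    have hE : (∏ j ∈ univ.erase i, (u i - u j)) ≠ 0 :=
      Finset.prod_ne_zero_iff.mpr fun j hj => huu i j (Finset.mem_erase.mp hj).1
    have hDi : (∏ j ∈ univ.erase i, (z - u j)) ≠ 0 :=
      Finset.prod_ne_zero_iff.mpr fun j _ => hzu' j
    rw [ha, hL', hC, hcsplit, hDsplit, smul_eq_mul]
    field_simp
    rw [← neg_sub z (u i), div_neg, neg_neg]
  have t1 : τ • ((F.eval z * ∏ i, c / (z - u i)) • Pi0) = (a⁻¹ * F.eval z) • Pi0 := by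
    rw [smul_smul, s1, smul_eq_mul]
  have t2 : ∀ i : Fin S, τ • (((c / (u i - z)) * F.eval (u i)
        * ∏ j ∈ univ.erase i, c / (u i - u j)) • (ν z * Pie i))
      = -((a⁻¹ * (L i * F.eval (u i))) • (ν z * Pie i)) := by
    intro i
    rw [smul_smul, s2 i, neg_smul, neg_neg, smul_eq_mul]
  rw [Finset.sum_congr rfl fun i _ => t2 i]
  rw [t1, Finset.sum_neg_distrib, ← sub_eq_add_neg]
end

section
/- Let V be a ℂ-vector space, c ∈ ℂ nonzero, S ∈ ℕ, and let λ_1, λ_2, F : ℂ → ℂ be functions and κ, κ̃, κ⁻, ρ_1, ρ_2, μ ∈ ℂ with μ ≠ 0. Let t, ν_{12} : ℂ → End(V), |0⟩ ∈ V, and let u_1, …, u_S ∈ ℂ be pairwise distinct and z ∈ ℂ with z ≠ u_i for all i. Assume: (a) the off-shell action t(z) ν_{12}(ū)|0⟩ = (κ⁻/μ) ν_{12}(z) ν_{12}(ū)|0⟩ + Λ_1(z,ū) ν_{12}(ū)|0⟩ + Σ_{i=1}^S g(u_i,z) E_1(u_i,ū_i) ν_{12}(z) ν_{12}(ū_i)|0⟩,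 where Λ_1(z,ū) = (κ̃−ρ_1)λ_1(z) f(ū,z) + (κ−ρ_2)λ_2(z) f(z,ū) and E_1(u_i,ū_i) = (κ−ρ_2)λ_2(u_i) f(u_i,ū_i) − (κ̃−ρ_1)λ_1(u_i) f(ū_i,u_i); and (b) the operator identity (κ⁻/μ) ν_{12}(z) ν_{12}(ū) = (ρ_1+ρ_2)( F(z) g(z,ū) ν_{12}(ū) + Σ_{i=1}^S g(u_i,z) F(u_i) g(u_i,ū_i) ν_{12}(z) ν_{12}(ū_i) ). Then t(z) ν_{12}(ū)|0⟩ = Λ(z,ū) ν_{12}(ū)|0⟩ + Σ_{i=1}^S g(u_i,z) E(u_i,ū_i) ν_{12}(z) ν_{12}(ū_i)|0⟩, where Λ(z,ū) = Λ_1(z,ū) + (ρ_1+ρ_2) F(z) g(z,ū) and E(u_i,ū_i) = E_1(u_i,ū_i) + (ρ_1+ρ_2) F(u_i) g(u_i,ū_i). In particular, if the inhomogeneous Bethe equations E(u_i,ū_i) = 0 hold for all i = 1, …, S, then ν_{12}(ū)|0⟩ is an eigenvector of t(z) with eigenvalue Λ(z,ū). -/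
open Finset in
/-- Main spectral theorem of the modified algebraic Bethe ansatz for the twisted XXX
chain: combining (a) the off-shell action of the twisted transfer matrix `t(z)` on
the modified Bethe vector `ν₁₂(ū)|0⟩` with (b) the multiple-product identity for the
null twisted transfer matrix `ν₁₂`, yields the action
`t(z) ν₁₂(ū)|0⟩ = Λ(z,ū) ν₁₂(ū)|0⟩ + Σᵢ g(uᵢ,z) E(uᵢ,ūᵢ) ν₁₂(z) ν₁₂(ūᵢ)|0⟩`;
when the inhomogeneous Bethe equations hold, `ν₁₂(ū)|0⟩` is an eigenvector. -/
theorem MABA_spectral_theorem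
    {V : Type*} [AddCommGroup V] [Module ℂ V]
    (c : ℂ) (hc : c ≠ 0) (S : ℕ)
    (lam1 lam2 F : ℂ → ℂ) (κ κt κm ρ1 ρ2 μ : ℂ) (hμ : μ ≠ 0)
    (t ν12 : ℂ → Module.End ℂ V) (vac : V)
    (u : Fin S → ℂ) (huinj : Function.Injective u)
    (z : ℂ) (hzu : ∀ i, z ≠ u i)
    (B : Module.End ℂ V) (hB : B = (List.ofFn fun i => ν12 (u i)).prod)
    (Bsub : Fin S → Module.End ℂ V)
    (hBsub : ∀ i, Bsub i =
      (List.ofFn fun j => if j = i then (1 : Module.End ℂ V) else ν12 (u j)).prod)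
    (Λ1 : ℂ) (hΛ1 : Λ1 = (κt - ρ1) * lam1 z * (∏ i, (u i - z + c) / (u i - z))
      + (κ - ρ2) * lam2 z * (∏ i, (z - u i + c) / (z - u i)))
    (E1 : Fin S → ℂ)
    (hE1 : ∀ i, E1 i =
      (κ - ρ2) * lam2 (u i) * (∏ j ∈ univ.erase i, (u i - u j + c) / (u i - u j))
      - (κt - ρ1) * lam1 (u i) * (∏ j ∈ univ.erase i, (u j - u i + c) / (u j - u i)))
    (ha : t z (B vac) = (κm / μ) • (ν12 z (B vac)) + Λ1 • (B vac)
      + ∑ i, ((c / (u i - z)) * E1 i) • (ν12 z (Bsub i vac)))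
    (hb : (κm / μ) • (ν12 z * B) = (ρ1 + ρ2) •
      ((F z * ∏ i, c / (z - u i)) • B
        + ∑ i, ((c / (u i - z)) * F (u i) * ∏ j ∈ univ.erase i, c / (u i - u j)) •
            (ν12 z * Bsub i))) :
    t z (B vac) = (Λ1 + (ρ1 + ρ2) * (F z * ∏ i, c / (z - u i))) • (B vac)
      + ∑ i, ((c / (u i - z)) *
          (E1 i + (ρ1 + ρ2) * (F (u i) * ∏ j ∈ univ.erase i, c / (u i - u j)))) •
            (ν12 z (Bsub i vac)) ∧
    ((∀ i, E1 i + (ρ1 + ρ2) * (F (u i) * ∏ j ∈ univ.erase i, c / (u i - u j)) = 0) →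
      t z (B vac) = (Λ1 + (ρ1 + ρ2) * (F z * ∏ i, c / (z - u i))) • (B vac)) := by

  have hb' := congrArg (fun (f : Module.End ℂ V) => f vac) hb
  simp only [LinearMap.smul_apply, LinearMap.add_apply,
    LinearMap.sum_apply, Module.End.mul_apply] at hb'
  have hmain : t z (B vac) = (Λ1 + (ρ1 + ρ2) * (F z * ∏ i, c / (z - u i))) • (B vac)
      + ∑ i, ((c / (u i - z)) *
          (E1 i + (ρ1 + ρ2) * (F (u i) * ∏ j ∈ univ.erase i, c / (u i - u j)))) •
            (ν12 z (Bsub i vac)) := by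
    have hsum : ∑ i, ((c / (u i - z)) *
          (E1 i + (ρ1 + ρ2) * (F (u i) * ∏ j ∈ univ.erase i, c / (u i - u j)))) •
            (ν12 z (Bsub i vac))
        = (∑ i, ((c / (u i - z)) * E1 i) • (ν12 z (Bsub i vac)))
          + (ρ1 + ρ2) • ∑ i, ((c / (u i - z)) * F (u i) *
              ∏ j ∈ univ.erase i, c / (u i - u j)) • (ν12 z (Bsub i vac)) := by
      rw [Finset.smul_sum, ← Finset.sum_add_distrib]
      refine Finset.sum_congr rfl fun i _ => ?_
      rw [smul_smul, ← add_smul]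
      congr 1
      ring
    rw [ha, hb', hsum]
    module
  refine ⟨hmain, fun hE => ?_⟩
  rw [hmain]
  have : ∀ i ∈ Finset.univ, ((c / (u i - z)) *
      (E1 i + (ρ1 + ρ2) * (F (u i) * ∏ j ∈ univ.erase i, c / (u i - u j)))) •
        (ν12 z (Bsub i vac)) = 0 := by
    intro i _
    rw [hE i, mul_zero, zero_smul]
  rw [Finset.sum_congr rfl this, Finset.sum_const_zero, add_zero]
end

section
/- Fix c ∈ ℂ nonzero, N ∈ ℕ, θ_1, …, θ_N ∈ ℂ, positive half-integers s_1, …, s_N, and set S = Σ_{i=1}^N 2s_i. Let κ, κ̃, ρ_1, ρ_2 ∈ ℂ. Let u_1, …, u_S and v_1, …, v_S be complex numbers, Q⁺(z) = ∏_{i=1}^S (z−u_i)/c, Q⁻(z) = ∏_{i=1}^S (z−v_i)/c, and suppose there is a function Λ : ℂ → ℂ such that for all z ∈ ℂ: Λ(z) Q⁺(z) = (κ̃−ρ_1) λ_1(z) Q⁺(z−c) + (κ−ρ_2) λ_2(z) Q⁺(z+c) + (ρ_1+ρ_2) F(z) and Λ(z) Q⁻(z) = (κ−ρ_2) λ_1(z)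 Q⁻(z−c) + (κ̃−ρ_1) λ_2(z) Q⁻(z+c) + (ρ_1+ρ_2) F(z). Then the modified quantum Wronskian equation holds for all z ∈ ℂ: λ(z+c)·[(κ̃−ρ_1) Q⁺(z−c) Q⁻(z) − (κ−ρ_2) Q⁺(z) Q⁻(z−c)] − λ(z)·[(κ̃−ρ_1) Q⁺(z) Q⁻(z+c) − (κ−ρ_2) Q⁺(z+c) Q⁻(z)] = (ρ_1+ρ_2)(Q⁺(z) − Q⁻(z)) λ(z) λ(z+c); equivalently, with W(z) = ((κ̃−ρ_1)Q⁺(z−c)Q⁻(z) − (κ−ρ_2)Q⁺(z)Q⁻(z−c))/λ(z), one has W(z) − W(z+c) = (ρ_1+ρ_2)(Q⁺(z) − Q⁻(z)). -/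
/-- Modified quantum Wronskian equation: if the two functional Baxter Q-operators
`Q⁺`, `Q⁻` (monic degree-`S` polynomials over `c`) solve the two inhomogeneous
Baxter T-Q equations for a common eigenvalue `Λ`, then for all `z`
`λ(z+c)[(κ̃-ρ₁)Q⁺(z-c)Q⁻(z) - (κ-ρ₂)Q⁺(z)Q⁻(z-c)]
 - λ(z)[(κ̃-ρ₁)Q⁺(z)Q⁻(z+c) - (κ-ρ₂)Q⁺(z+c)Q⁻(z)]
 = (ρ₁+ρ₂)(Q⁺(z) - Q⁻(z)) λ(z) λ(z+c)`;
equivalently, `W(z) - W(z+c) = (ρ₁+ρ₂)(Q⁺(z) - Q⁻(z))` wherever `λ` does not vanish. -/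
theorem modified_quantum_Wronskian (c : ℂ) (hc : c ≠ 0) (N : ℕ) (θ : Fin N → ℂ)
    (s : Fin N → ℂ) (m : Fin N → ℕ) (hm : ∀ i, 0 < m i)
    (hs : ∀ i, 2 * s i = (m i : ℂ))
    (S : ℕ) (hS : S = ∑ i, m i) (κ κt ρ1 ρ2 : ℂ)
    (u v : Fin S → ℂ)
    (lam1 lam2 lam F Qp Qm : ℂ → ℂ)
    (hlam1 : ∀ z, lam1 z = ∏ i, (z - θ i + c * (s i + 1 / 2)) / c)
    (hlam2 : ∀ z, lam2 z = ∏ i, (z - θ i - c * (s i - 1 / 2)) / c)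
    (hlam : ∀ z, lam z =
      ∏ i, ∏ k ∈ Finset.Icc 1 (m i), (z - θ i + c * (s i - (k : ℂ) + 1 / 2)) / c)
    (hF : ∀ z, F z =
      ∏ i, ∏ k ∈ Finset.Icc 0 (m i), (z - θ i + c * (s i - (k : ℂ) + 1 / 2)) / c)
    (hQp : ∀ z, Qp z = ∏ i, (z - u i) / c)
    (hQm : ∀ z, Qm z = ∏ i, (z - v i) / c)
    (Λ : ℂ → ℂ)
    (hTQp : ∀ z, Λ z * Qp z = (κt - ρ1) * lam1 z * Qp (z - c)
      + (κ - ρ2) * lam2 z * Qp (z + c) + (ρ1 + ρ2) * F z)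
    (hTQm : ∀ z, Λ z * Qm z = (κ - ρ2) * lam1 z * Qm (z - c)
      + (κt - ρ1) * lam2 z * Qm (z + c) + (ρ1 + ρ2) * F z) :
    ∀ z, (lam (z + c) * ((κt - ρ1) * Qp (z - c) * Qm z - (κ - ρ2) * Qp z * Qm (z - c))
        - lam z * ((κt - ρ1) * Qp z * Qm (z + c) - (κ - ρ2) * Qp (z + c) * Qm z)
      = (ρ1 + ρ2) * (Qp z - Qm z) * lam z * lam (z + c)) ∧
      (lam z ≠ 0 → lam (z + c) ≠ 0 →
        ((κt - ρ1) * Qp (z - c) * Qm z - (κ - ρ2) * Qp z * Qm (z - c)) / lam z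
          - ((κt - ρ1) * Qp z * Qm (z + c) - (κ - ρ2) * Qp (z + c) * Qm z) / lam (z + c)
        = (ρ1 + ρ2) * (Qp z - Qm z)) := by
  -- the elementary factor
  set f : Fin N → ℕ → ℂ → ℂ :=
    fun i k z => (z - θ i + c * (s i - (k : ℂ) + 1 / 2)) / c with hfdef
  -- rewrite lam and F using `Finset.range`
  have hlamR : ∀ z, lam z = ∏ i, ∏ k ∈ Finset.range (m i), f i (k + 1) z := by
    intro z
    rw [hlam z]
    refine Finset.prod_congr rfl fun i _ => ?_
    rw [show Finset.Icc 1 (m i) = Finset.Ico 1 (m i + 1) by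
      rw [Finset.Ico_add_one_right_eq_Icc], Finset.prod_Ico_eq_prod_range]
    simp only [Nat.add_sub_cancel]
    refine Finset.prod_congr rfl fun k _ => ?_
    simp only [hfdef]
    push_cast
    ring_nf
  have hFR : ∀ z, F z = ∏ i, ∏ k ∈ Finset.range (m i + 1), f i k z := by
    intro z
    rw [hF z]
    refine Finset.prod_congr rfl fun i _ => ?_
    rw [show Finset.Icc 0 (m i) = Finset.Ico 0 (m i + 1) by
      rw [Finset.Ico_add_one_right_eq_Icc], ← Finset.range_eq_Ico]
  -- Key identity 1 : F z = lam1 z * lam z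
  have HF1 : ∀ z, F z = lam1 z * lam z := by
    intro z
    rw [hFR z, hlam1 z, hlamR z, ← Finset.prod_mul_distrib]
    refine Finset.prod_congr rfl fun i _ => ?_
    rw [Finset.prod_range_succ']
    have h0 : f i 0 z = (z - θ i + c * (s i + 1 / 2)) / c := by
      simp [hfdef]
    rw [h0]; ring
  -- Key identity 2 : F z = lam2 z * lam (z + c)
  have HF2 : ∀ z, F z = lam2 z * lam (z + c) := by
    intro z
    rw [hFR z, hlam2 z, hlamR (z + c), ← Finset.prod_mul_distrib]
    refine Finset.prod_congr rfl fun i _ => ?_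
    rw [Finset.prod_range_succ]
    have hshift : ∀ k, f i (k + 1) (z + c) = f i k z := by
      intro k
      simp only [hfdef]
      push_cast
      ring_nf
    have htop : f i (m i) z = (z - θ i - c * (s i - 1 / 2)) / c := by
      simp only [hfdef]
      rw [div_eq_div_iff hc hc]
      push_cast
      linear_combination c * c * hs i
    rw [Finset.prod_congr rfl (fun k _ => hshift k), htop]
    ring
  -- Bethe-type relation from the two TQ equations
  have EB : ∀ z, lam1 z * ((κt - ρ1) * Qp (z - c) * Qm z - (κ - ρ2) * Qp z * Qm (z - c))
      - lam2 z * ((κt - ρ1) * Qp z * Qm (z + c) - (κ - ρ2) * Qp (z + c) * Qm z)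
      = (ρ1 + ρ2) * F z * (Qp z - Qm z) := by
    intro z
    linear_combination Qp z * hTQm z - Qm z * hTQp z
  -- the target function, multiplied by lam2, vanishes
  have key : ∀ z, lam2 z *
      (lam (z + c) * ((κt - ρ1) * Qp (z - c) * Qm z - (κ - ρ2) * Qp z * Qm (z - c))
        - lam z * ((κt - ρ1) * Qp z * Qm (z + c) - (κ - ρ2) * Qp (z + c) * Qm z)
        - (ρ1 + ρ2) * (Qp z - Qm z) * lam z * lam (z + c)) = 0 := by
    intro z
    linear_combination lam z * EB z
      + ((κt - ρ1) * Qp (z - c) * Qm z - (κ - ρ2) * Qp z * Qm (z - c)) * HF1 z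
      + ((ρ1 + ρ2) * lam z * (Qp z - Qm z)
        - ((κt - ρ1) * Qp (z - c) * Qm z - (κ - ρ2) * Qp z * Qm (z - c))) * HF2 z
  -- remove the lam2 factor by density/continuity
  set G : ℂ → ℂ := fun z =>
      lam (z + c) * ((κt - ρ1) * Qp (z - c) * Qm z - (κ - ρ2) * Qp z * Qm (z - c))
        - lam z * ((κt - ρ1) * Qp z * Qm (z + c) - (κ - ρ2) * Qp (z + c) * Qm z)
        - (ρ1 + ρ2) * (Qp z - Qm z) * lam z * lam (z + c) with hG
  have hlam_cont : Continuous lam := by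
    have : lam = fun z => ∏ i, ∏ k ∈ Finset.Icc 1 (m i),
        (z - θ i + c * (s i - (k : ℂ) + 1 / 2)) / c := funext hlam
    rw [this]
    exact continuous_finset_prod _ fun i _ => continuous_finset_prod _ fun k _ => by fun_prop
  have hQp_cont : Continuous Qp := by
    have : Qp = fun z => ∏ i, (z - u i) / c := funext hQp
    rw [this]
    exact continuous_finset_prod _ fun i _ => by fun_prop
  have hQm_cont : Continuous Qm := by
    have : Qm = fun z => ∏ i, (z - v i) / c := funext hQm
    rw [this]
    exact continuous_finset_prod _ fun i _ => by fun_prop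
  have hG_cont : Continuous G := by
    rw [hG]; fun_prop
  have hdense : Dense {z : ℂ | lam2 z ≠ 0} := by
    have hsub : {z : ℂ | lam2 z = 0} ⊆ Set.range fun i : Fin N => θ i + c * (s i - 1 / 2) := by
      intro z hz
      simp only [Set.mem_setOf_eq, hlam2 z, Finset.prod_eq_zero_iff] at hz
      obtain ⟨i, -, hi⟩ := hz
      rw [div_eq_zero_iff] at hi
      rcases hi with hi | hi
      · exact ⟨i, by linear_combination -hi⟩
      · exact absurd hi hc
    have hcnt : (Set.range fun i : Fin N => θ i + c * (s i - 1 / 2)).Countable :=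
      (Set.finite_range _).countable
    have := Set.Countable.dense_compl ℂ hcnt
    refine this.mono ?_
    intro z hz
    exact fun h0 => hz (hsub h0)
  have hGzero : G = fun _ => (0 : ℂ) := by
    refine Continuous.ext_on hdense hG_cont continuous_const ?_
    intro z hz
    have := key z
    have h2 : lam2 z ≠ 0 := hz
    exact (mul_eq_zero.mp this).resolve_left h2
  intro z
  have hGz : G z = 0 := by rw [hGzero]
  have main : lam (z + c) * ((κt - ρ1) * Qp (z - c) * Qm z - (κ - ρ2) * Qp z * Qm (z - c))
        - lam z * ((κt - ρ1) * Qp z * Qm (z + c) - (κ - ρ2) * Qp (z + c) * Qm z)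
      = (ρ1 + ρ2) * (Qp z - Qm z) * lam z * lam (z + c) := by
    have := hGz
    simp only [hG] at this
    linear_combination this
  refine ⟨main, ?_⟩
  intro h1 h2
  field_simp
  linear_combination main
end

section
/- Fix c ∈ ℂ nonzero, N ∈ ℕ, θ_1, …, θ_N ∈ ℂ, positive half-integers s_1, …, s_N, and set S = Σ_{i=1}^N 2s_i. Let κ, κ̃, ρ_1, ρ_2, α⁺, α⁻ ∈ ℂ with α⁺α⁻ = (κ̃−ρ_1)(κ−ρ_2). Let q and Q⁺ be polynomials, with Q⁺(z) = ∏_{i=1}^S (z−u_i)/c for some u_1, …, u_S ∈ ℂ, and suppose there is a function Λ : ℂ → ℂ such that for all z ∈ ℂ: Λ(z) q(z) = α⁺ λ_1(z) q(z−c) + α⁻ λ_2(z) q(z+c) and Λ(z) Q⁺(z) = (κ̃−ρ_1) λ_1(z) Q⁺(z−c) + (κ−ρ_2) λ_2(z) Q⁺(z+c) + (ρ_1+ρ_2) F(z). Then for all z ∈ ℂ: (κ̃−ρ_1) λ(z+c)·[α⁺ q(z−c) Q⁺(z) − (κ̃−ρ_1) q(z) Q⁺(z−c)] − α⁻ λ(z)·[α⁺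 q(z) Q⁺(z+c) − (κ̃−ρ_1) q(z+c) Q⁺(z)] = (κ̃−ρ_1)(ρ_1+ρ_2) q(z) λ(z) λ(z+c); equivalently, with Ŵ(z) = (α⁺ q(z−c)Q⁺(z) − (κ̃−ρ_1) q(z)Q⁺(z−c))/λ(z) and r = α⁻/(κ̃−ρ_1) (assuming κ̃ ≠ ρ_1), one has Ŵ(z) − r Ŵ(z+c) = (ρ_1+ρ_2) q(z). -/
open Polynomial Finset

/-- Wronskian-type relation between the usual (homogeneous) Baxter T-Q
parametrization `q` of the twisted transfer matrix eigenvalue `Λ` (with twist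
eigenvalues `α⁺α⁻ = (κ̃-ρ₁)(κ-ρ₂)`) and its inhomogeneous modified-Bethe-ansatz
parametrization `Q⁺`: for all `z`,
`(κ̃-ρ₁)λ(z+c)[α⁺q(z-c)Q⁺(z) - (κ̃-ρ₁)q(z)Q⁺(z-c)]
 - α⁻λ(z)[α⁺q(z)Q⁺(z+c) - (κ̃-ρ₁)q(z+c)Q⁺(z)]
 = (κ̃-ρ₁)(ρ₁+ρ₂) q(z) λ(z) λ(z+c)`;
equivalently `Ŵ(z) - (α⁻/(κ̃-ρ₁)) Ŵ(z+c) = (ρ₁+ρ₂) q(z)` when `κ̃ ≠ ρ₁` and `λ`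
does not vanish. -/
theorem wronskian_homogeneous_vs_inhomogeneous (c : ℂ) (hc : c ≠ 0)
    (N : ℕ) (θ : Fin N → ℂ)
    (s : Fin N → ℂ) (m : Fin N → ℕ) (hm : ∀ i, 0 < m i)
    (hs : ∀ i, 2 * s i = (m i : ℂ))
    (S : ℕ) (hS : S = ∑ i, m i)
    (κ κt ρ1 ρ2 αp αm : ℂ) (hα : αp * αm = (κt - ρ1) * (κ - ρ2))
    (u : Fin S → ℂ)
    (lam1 lam2 lam F Qp : ℂ → ℂ) (q : Polynomial ℂ)
    (hlam1 : ∀ z, lam1 z = ∏ i, (z - θ i + c * (s i + 1 / 2)) / c)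
    (hlam2 : ∀ z, lam2 z = ∏ i, (z - θ i - c * (s i - 1 / 2)) / c)
    (hlam : ∀ z, lam z =
      ∏ i, ∏ k ∈ Finset.Icc 1 (m i), (z - θ i + c * (s i - (k : ℂ) + 1 / 2)) / c)
    (hF : ∀ z, F z =
      ∏ i, ∏ k ∈ Finset.Icc 0 (m i), (z - θ i + c * (s i - (k : ℂ) + 1 / 2)) / c)
    (hQp : ∀ z, Qp z = ∏ i, (z - u i) / c)
    (Λ : ℂ → ℂ)
    (hTQq : ∀ z, Λ z * q.eval z = αp * lam1 z * q.eval (z - c)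
      + αm * lam2 z * q.eval (z + c))
    (hTQP : ∀ z, Λ z * Qp z = (κt - ρ1) * lam1 z * Qp (z - c)
      + (κ - ρ2) * lam2 z * Qp (z + c) + (ρ1 + ρ2) * F z) :
    ∀ z, ((κt - ρ1) * lam (z + c) *
          (αp * q.eval (z - c) * Qp z - (κt - ρ1) * q.eval z * Qp (z - c))
        - αm * lam z *
          (αp * q.eval z * Qp (z + c) - (κt - ρ1) * q.eval (z + c) * Qp z)
      = (κt - ρ1) * (ρ1 + ρ2) * q.eval z * lam z * lam (z + c)) ∧
      (κt ≠ ρ1 → lam z ≠ 0 → lam (z + c) ≠ 0 →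
        (αp * q.eval (z - c) * Qp z - (κt - ρ1) * q.eval z * Qp (z - c)) / lam z
          - (αm / (κt - ρ1)) *
            ((αp * q.eval z * Qp (z + c) - (κt - ρ1) * q.eval (z + c) * Qp z) / lam (z + c))
        = (ρ1 + ρ2) * q.eval z) := by
  -- per-site factor
  set g : Fin N → ℂ → ℕ → ℂ := fun i z k => (z - θ i + c * (s i - (k : ℂ) + 1 / 2)) / c with hg
  -- lam in range form
  have hlamr : ∀ z, lam z = ∏ i, ∏ k ∈ Finset.range (m i), g i z (k + 1) := by
    intro z; rw [hlam]
    refine Finset.prod_congr rfl fun i _ => ?_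
    rw [← Finset.Ico_add_one_right_eq_Icc, Finset.prod_Ico_eq_prod_range]
    exact Finset.prod_congr rfl fun k _ => by rw [Nat.add_comm 1 k]
  have hFr : ∀ z, F z = ∏ i, ∏ k ∈ Finset.range (m i + 1), g i z k := by
    intro z; rw [hF]
    refine Finset.prod_congr rfl fun i _ => ?_
    rw [← Finset.Ico_add_one_right_eq_Icc, Finset.prod_Ico_eq_prod_range]
    exact Finset.prod_congr rfl fun k _ => by rw [Nat.zero_add]
  -- Wronskian-type product identity
  have hW : ∀ z, lam1 z * lam z = lam2 z * lam (z + c) := by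
    intro z
    rw [hlam1, hlam2, hlamr, hlamr, ← Finset.prod_mul_distrib, ← Finset.prod_mul_distrib]
    refine Finset.prod_congr rfl fun i _ => ?_
    have h1 : (z - θ i + c * (s i + 1 / 2)) / c = g i z 0 := by
      simp [hg]
    have h2 : (z - θ i - c * (s i - 1 / 2)) / c = g i z (m i) := by
      have : (m i : ℂ) = 2 * s i := (hs i).symm
      simp only [hg, this]; ring_nf
    have h3 : ∀ k, g i (z + c) (k + 1) = g i z k := by
      intro k; simp only [hg]; push_cast; ring_nf
    rw [h1, h2]
    calc g i z 0 * ∏ k ∈ Finset.range (m i), g i z (k + 1)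
        = ∏ k ∈ Finset.range (m i + 1), g i z k := by
          rw [Finset.prod_range_succ' (g i z)]; ring
      _ = g i z (m i) * ∏ k ∈ Finset.range (m i), g i (z + c) (k + 1) := by
          rw [Finset.prod_range_succ]
          rw [Finset.prod_congr rfl fun k _ => (h3 k)]
          ring
  have hFid : ∀ z, F z = lam1 z * lam z := by
    intro z
    rw [hlam1, hlamr, hFr, ← Finset.prod_mul_distrib]
    refine Finset.prod_congr rfl fun i _ => ?_
    have h1 : (z - θ i + c * (s i + 1 / 2)) / c = g i z 0 := by simp [hg]
    rw [h1, Finset.prod_range_succ' (g i z)]; ring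
  -- eliminate Λ pointwise
  have hE : ∀ z, lam2 z *
      ((κt - ρ1) * lam (z + c) *
          (αp * q.eval (z - c) * Qp z - (κt - ρ1) * q.eval z * Qp (z - c))
        - αm * lam z *
          (αp * q.eval z * Qp (z + c) - (κt - ρ1) * q.eval (z + c) * Qp z)
      - (κt - ρ1) * (ρ1 + ρ2) * q.eval z * lam z * lam (z + c)) = 0 := by
    intro z
    have e : (αp * lam1 z * q.eval (z - c) + αm * lam2 z * q.eval (z + c)) * Qp z
        = ((κt - ρ1) * lam1 z * Qp (z - c) + (κ - ρ2) * lam2 z * Qp (z + c)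
            + (ρ1 + ρ2) * F z) * q.eval z := by
      rw [← hTQq z, ← hTQP z]; ring
    linear_combination ((κt - ρ1) * lam z) * e
      + (- (κt - ρ1) * αp * q.eval (z - c) * Qp z
          + (κt - ρ1) ^ 2 * q.eval z * Qp (z - c)
          + (κt - ρ1) * (ρ1 + ρ2) * q.eval z * lam z) * (hW z)
      + ((κt - ρ1) * (ρ1 + ρ2) * q.eval z * lam z) * (hFid z)
      - (lam2 z * lam z * q.eval z * Qp (z + c)) * hα
  -- polynomials realizing Qp, lam, and the target difference
  set Qpoly : Polynomial ℂ := ∏ i, (Polynomial.C c⁻¹ * (Polynomial.X - Polynomial.C (u i))) with hQpoly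
  set Lpoly : Polynomial ℂ := ∏ i, ∏ k ∈ Finset.Icc 1 (m i),
      (Polynomial.C c⁻¹ * (Polynomial.X - Polynomial.C (θ i - c * (s i - (k : ℂ) + 1 / 2)))) with hLpoly
  have hQe : ∀ z, Qpoly.eval z = Qp z := by
    intro z
    rw [hQp, hQpoly, Polynomial.eval_prod]
    exact Finset.prod_congr rfl fun i _ => by simp [div_eq_inv_mul]
  have hLe : ∀ z, Lpoly.eval z = lam z := by
    intro z
    rw [hlam, hLpoly, Polynomial.eval_prod]
    refine Finset.prod_congr rfl fun i _ => ?_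
    rw [Polynomial.eval_prod]
    refine Finset.prod_congr rfl fun k _ => ?_
    rw [Polynomial.eval_mul, Polynomial.eval_C, Polynomial.eval_sub, Polynomial.eval_X,
      Polynomial.eval_C, div_eq_inv_mul]
    ring
  set sh : Polynomial ℂ := Polynomial.X + Polynomial.C c with hsh
  set shm : Polynomial ℂ := Polynomial.X - Polynomial.C c with hshm
  set PD : Polynomial ℂ :=
    Polynomial.C (κt - ρ1) * (Lpoly.comp sh) *
        (Polynomial.C αp * (q.comp shm) * Qpoly
          - Polynomial.C (κt - ρ1) * q * (Qpoly.comp shm))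
      - Polynomial.C αm * Lpoly *
        (Polynomial.C αp * q * (Qpoly.comp sh)
          - Polynomial.C (κt - ρ1) * (q.comp sh) * Qpoly)
      - Polynomial.C ((κt - ρ1) * (ρ1 + ρ2)) * q * Lpoly * (Lpoly.comp sh) with hPD
  have hPDe : ∀ z, PD.eval z =
      (κt - ρ1) * lam (z + c) *
          (αp * q.eval (z - c) * Qp z - (κt - ρ1) * q.eval z * Qp (z - c))
        - αm * lam z *
          (αp * q.eval z * Qp (z + c) - (κt - ρ1) * q.eval (z + c) * Qp z)
      - (κt - ρ1) * (ρ1 + ρ2) * q.eval z * lam z * lam (z + c) := by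
    intro z
    simp only [hPD, hsh, hshm, Polynomial.eval_sub, Polynomial.eval_mul, Polynomial.eval_add,
      Polynomial.eval_C, Polynomial.eval_X, Polynomial.eval_comp, hQe, hLe]
  have hPD0 : PD = 0 := by
    apply Polynomial.eq_zero_of_infinite_isRoot
    have hsub : (Set.range fun i => θ i + c * (s i - 1 / 2))ᶜ ⊆ {x | PD.IsRoot x} := by
      intro z hz
      have hl2 : lam2 z ≠ 0 := by
        rw [hlam2]
        refine Finset.prod_ne_zero_iff.2 fun i _ => ?_
        rw [div_ne_zero_iff]
        refine ⟨fun h0 => hz ⟨i, ?_⟩, hc⟩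
        linear_combination -h0
      have := hE z
      have : (κt - ρ1) * lam (z + c) *
          (αp * q.eval (z - c) * Qp z - (κt - ρ1) * q.eval z * Qp (z - c))
        - αm * lam z *
          (αp * q.eval z * Qp (z + c) - (κt - ρ1) * q.eval (z + c) * Qp z)
      - (κt - ρ1) * (ρ1 + ρ2) * q.eval z * lam z * lam (z + c) = 0 := by
        rcases mul_eq_zero.1 this with h | h
        · exact absurd h hl2
        · exact h
      simpa [Polynomial.IsRoot, hPDe z] using this
    exact Set.Infinite.mono hsub ((Set.finite_range _).infinite_compl)
  intro z
  have hmain : (κt - ρ1) * lam (z + c) *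
          (αp * q.eval (z - c) * Qp z - (κt - ρ1) * q.eval z * Qp (z - c))
        - αm * lam z *
          (αp * q.eval z * Qp (z + c) - (κt - ρ1) * q.eval (z + c) * Qp z)
      = (κt - ρ1) * (ρ1 + ρ2) * q.eval z * lam z * lam (z + c) := by
    have := hPDe z
    rw [hPD0] at this
    simp only [Polynomial.eval_zero] at this
    linear_combination -this
  refine ⟨hmain, fun hne h1 h2 => ?_⟩
  have hκ : κt - ρ1 ≠ 0 := sub_ne_zero_of_ne hne
  field_simp
  linear_combination hmain
end

section
/- Let R be an associative unital ℂ-algebra and c ∈ ℂ nonzero. Suppose a, b : ℂ → R satisfy b(u)b(v) = b(v)b(u) for all u, v, and a(v)b(u) = f(v,u) b(u)a(v) + g(u,v) b(v)a(u) for all distinct u, v. Then for every u ∈ ℂ, every integer n ≥ 1, and every z ∈ ℂ with z ≠ u−cj for j = 1, …, n: a(z) ∏_{j=1}^n b(u−cj) = (∏_{j=1}^n f(z, u−cj)) (∏_{j=1}^n b(u−cj)) a(z) + g(u−c, z) (∏_{j=2}^n f(u−c, u−cj)) b(z) (∏_{j=2}^n b(u−cj)) a(u−c). -/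
lemma my_noncommProd_map {α β M : Type*} [Monoid M] (s : Finset α) (e : α ↪ β) (f : β → M)
    (comm) (comm') :
    (s.map e).noncommProd f comm = s.noncommProd (fun x => f (e x)) comm' := by
  unfold Finset.noncommProd
  have h : (s.map e).val.map f = s.val.map (fun x => f (e x)) := by
    simp [Multiset.map_map]
  congr 1

open Finset in
/-- String-commutation identity of Appendix B: for operators `a`, `b` with
`b(u)b(v) = b(v)b(u)` and `a(v)b(u) = f(v,u) b(u)a(v) + g(u,v) b(v)a(u)`
(with `g(u,v) = c/(u-v)`, `f(u,v) = (u-v+c)/(u-v)`, noting `f(x-c,x) = 0`),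
the action of `a(z)` on the string product `∏_{j=1}^n b(u-cj)` produces only
two terms. -/
theorem string_commutation_identity
    {R : Type*} [Ring R] [Algebra ℂ R] (c : ℂ) (hc : c ≠ 0)
    (a b : ℂ → R)
    (hbb : ∀ u v : ℂ, b u * b v = b v * b u)
    (hab : ∀ u v : ℂ, u ≠ v →
      a v * b u = ((v - u + c) / (v - u)) • (b u * a v)
        + (c / (u - v)) • (b v * a u))
    (u : ℂ) (n : ℕ) (hn : 1 ≤ n)
    (z : ℂ) (hz : ∀ j ∈ Finset.Icc 1 n, z ≠ u - c * (j : ℂ)) :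
    a z * (Finset.Icc 1 n).noncommProd (fun j => b (u - c * (j : ℂ)))
        (fun _ _ _ _ _ => hbb _ _) =
      (∏ j ∈ Finset.Icc 1 n, (z - (u - c * (j : ℂ)) + c) / (z - (u - c * (j : ℂ)))) •
        ((Finset.Icc 1 n).noncommProd (fun j => b (u - c * (j : ℂ)))
          (fun _ _ _ _ _ => hbb _ _) * a z)
      + ((c / ((u - c) - z)) *
          ∏ j ∈ Finset.Icc 2 n, ((u - c) - (u - c * (j : ℂ)) + c) / ((u - c) - (u - c * (j : ℂ)))) •
        (b z * (Finset.Icc 2 n).noncommProd (fun j => b (u - c * (j : ℂ)))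
          (fun _ _ _ _ _ => hbb _ _) * a (u - c)) := by
  induction n, hn using Nat.le_induction generalizing u z with
  | base =>
    have h1 : z ≠ u - c := by simpa using hz 1 (by simp)
    have he : Finset.Icc 2 1 = (∅ : Finset ℕ) := by decide
    simp only [Finset.Icc_self, Finset.noncommProd_singleton, Finset.prod_singleton, he,
      Finset.noncommProd_empty, Finset.prod_empty, mul_one, Nat.cast_one]
    exact hab (u - c) z (Ne.symm h1)
  | succ n hn ih =>
    have h1mem : (1 : ℕ) ∉ Finset.Icc 2 (n + 1) := by simp
    have hins : Finset.Icc 1 (n + 1) = insert 1 (Finset.Icc 2 (n + 1)) := by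
      ext x; simp; omega
    have hmap : Finset.Icc 2 (n + 1) = (Finset.Icc 1 n).map (addRightEmbedding 1) := by
      rw [map_add_right_Icc]
    have hfun : ∀ j : ℕ, u - c * (((j + 1 : ℕ) : ℂ)) = (u - c) - c * (j : ℂ) := by
      intro j; push_cast; ring
    -- rewrite the noncommProd over Icc 2 (n+1) as one over Icc 1 n with base u - c
    have hP' : (Finset.Icc 2 (n+1)).noncommProd (fun j => b (u - c * (j : ℂ)))
        (fun _ _ _ _ _ => hbb _ _)
        = (Finset.Icc 1 n).noncommProd (fun j => b ((u - c) - c * (j : ℂ)))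
          (fun _ _ _ _ _ => hbb _ _) := by
      rw [hmap]
      refine (my_noncommProd_map (Finset.Icc 1 n) (addRightEmbedding 1)
        (fun j => b (u - c * (j : ℂ))) _ (fun _ _ _ _ _ => hbb _ _)).trans ?_
      exact Finset.noncommProd_congr rfl (fun x _ => by
        simp only [addRightEmbedding_apply, hfun]) _
    -- the full noncommProd splits
    have hPfull : (Finset.Icc 1 (n+1)).noncommProd (fun j => b (u - c * (j : ℂ)))
        (fun _ _ _ _ _ => hbb _ _)
        = b (u - c) * (Finset.Icc 1 n).noncommProd (fun j => b ((u - c) - c * (j : ℂ)))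
          (fun _ _ _ _ _ => hbb _ _) := by
      refine (Finset.noncommProd_congr hins (fun _ _ => rfl) _).trans ?_
      refine (Finset.noncommProd_insert_of_notMem _ _ _ _ h1mem).trans ?_
      rw [hP']
      norm_num
    -- scalar product rewrites
    have hFprod : ∀ w : ℂ, (∏ j ∈ Finset.Icc 2 (n+1),
          (w - (u - c * (j : ℂ)) + c) / (w - (u - c * (j : ℂ))))
        = ∏ j ∈ Finset.Icc 1 n,
          (w - ((u - c) - c * (j : ℂ)) + c) / (w - ((u - c) - c * (j : ℂ))) := by
      intro w
      rw [hmap, Finset.prod_map]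
      exact Finset.prod_congr rfl (fun x _ => by
        simp only [addRightEmbedding_apply, hfun])
    have hFfull : (∏ j ∈ Finset.Icc 1 (n+1),
          (z - (u - c * (j : ℂ)) + c) / (z - (u - c * (j : ℂ))))
        = ((z - (u - c) + c) / (z - (u - c))) * ∏ j ∈ Finset.Icc 1 n,
          (z - ((u - c) - c * (j : ℂ)) + c) / (z - ((u - c) - c * (j : ℂ))) := by
      rw [hins, Finset.prod_insert h1mem, hFprod]
      norm_num
    -- hypotheses for the two IH applications
    have hz1 : z ≠ u - c := by simpa using hz 1 (by simp)
    have hz2 : z ≠ u - 2 * c := by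
      have := hz 2 (by simp; omega)
      simpa [show ((2:ℕ):ℂ) = 2 by norm_num, mul_comm] using this
    have hz' : ∀ j ∈ Finset.Icc 1 n, z ≠ (u - c) - c * (j : ℂ) := by
      intro j hj
      have hj' : j + 1 ∈ Finset.Icc 1 (n + 1) := by
        simp at hj ⊢; omega
      have := hz (j + 1) hj'
      rw [hfun] at this; exact this
    have hz'' : ∀ j ∈ Finset.Icc 1 n, (u - c) ≠ (u - c) - c * (j : ℂ) := by
      intro j hj
      simp only [Finset.mem_Icc] at hj
      have hj0 : (j : ℂ) ≠ 0 := by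
        exact_mod_cast Nat.cast_ne_zero.mpr (by omega)
      intro h
      exact mul_ne_zero hc hj0 (by linear_combination h)
    have hd1 : z - (u - c) ≠ 0 := sub_ne_zero.mpr hz1
    have hd2 : (u - c - c) - z ≠ 0 := by
      intro h; exact hz2 (by linear_combination -h)
    rw [hPfull, hFfull, hFprod (u - c), hP', ← mul_assoc,
      hab (u - c) z (Ne.symm hz1)]
    simp only [add_mul, smul_mul_assoc, mul_assoc]
    rw [ih (u - c) z hz', ih (u - c) (u - c) hz'']
    have hswap : ∀ X : R, b (u - c) * (b z * X) = b z * (b (u - c) * X) := by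
      intro X; rw [← mul_assoc, ← mul_assoc, hbb]
    simp only [add_mul, mul_add, smul_add, smul_mul_assoc, mul_smul_comm, smul_smul, mul_assoc]
    rw [hswap]
    have hd3 : u - c - c - (u - c) ≠ 0 := by
      intro h; exact hc (by linear_combination -h)
    have hd4 : u - c - z ≠ 0 := by
      intro h; exact hz1 (by linear_combination -h)
    set H := ∏ j ∈ Finset.Icc 2 n,
      (u - c - c - (u - c - c * (j : ℂ)) + c) / (u - c - c - (u - c - c * (j : ℂ))) with hH
    match_scalars
    · ring
    · field_simp
      ring
    · ring
end
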